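/- arXiv:2402.17476 — 5 statements merged into one kernel-verified Lean document; each statement's English description precedes it below -/
import Mathlib

section
/- Let E be a real normed vector space, (Ω, 𝒜, μ) a measure space, p a real number with 2 ≤ p < ∞, and T : E → L^p(μ) a continuous linear map. Then the functional Φ : E → ℝ defined by Φ(u) = (1/p) ∫_Ω |Tu|^p dμ is continuously Fréchet differentiable on E, and its Fréchet derivative at u ∈ E is the continuous linear functional φ ↦ ∫_Ω |Tu|^{p−2} (Tu)(Tφ) dμ. -/
open MeasureTheory Filter Topology Set
open scoped ENNReal

namespace PFC

/-- Derivative of `s ↦ |s|^q * s`. -/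
lemma hasDerivAt_abs_rpow_mul_self {q : ℝ} (hq : 0 ≤ q) (t : ℝ) :
    HasDerivAt (fun s : ℝ => |s| ^ q * s) ((q + 1) * |t| ^ q) t := by
  rcases eq_or_lt_of_le hq with hq0 | hq0
  · simp only [← hq0, Real.rpow_zero, one_mul, zero_add]
    exact hasDerivAt_id t
  rcases eq_or_ne t 0 with rfl | ht
  · rw [abs_zero, Real.zero_rpow hq0.ne', mul_zero]
    rw [hasDerivAt_iff_tendsto_slope]
    have h1 : Tendsto (fun s : ℝ => |s| ^ q) (𝓝[≠] (0:ℝ)) (𝓝 0) := by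
      have h0 : Tendsto (fun s : ℝ => |s| ^ q) (𝓝 (0:ℝ)) (𝓝 (|0| ^ q)) :=
        (continuous_abs.tendsto (0:ℝ)).rpow_const (Or.inr hq)
      have h0' := h0.mono_left (nhdsWithin_le_nhds (s := {(0:ℝ)}ᶜ))
      simpa [Real.zero_rpow hq0.ne'] using h0'
    refine h1.congr' ?_
    filter_upwards [self_mem_nhdsWithin] with s hs
    have hs : s ≠ 0 := hs
    have : slope (fun s : ℝ => |s| ^ q * s) 0 s = |s| ^ q := by
      rw [slope_def_field]
      simp [Real.zero_rpow hq0.ne']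
      field_simp
    rw [this]
  · have habs : HasDerivAt (fun s : ℝ => |s| ^ q) (q * |t| ^ (q - 1) * (SignType.sign t : ℝ)) t := by
      have h1 : HasDerivAt (fun y : ℝ => y ^ q) (q * |t| ^ (q - 1)) |t| := by
        simpa using Real.hasDerivAt_rpow_const (x := |t|) (p := q) (Or.inl (abs_ne_zero.2 ht))
      exact h1.comp t (hasDerivAt_abs ht)
    have := habs.mul (hasDerivAt_id t)
    refine this.congr_deriv (Eq.symm ?_)
    have hsign : (SignType.sign t : ℝ) * t = |t| := by
      rcases ht.lt_or_gt with h | h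
      · simp [h, abs_of_neg h]
      · simp [h, abs_of_pos h]
    have h2 : |t| ^ (q - 1) * |t| = |t| ^ q := by
      rw [← Real.rpow_add_one (abs_ne_zero.2 ht)]; ring_nf
    calc (q + 1) * |t| ^ q = q * (|t| ^ (q-1) * |t|) + |t| ^ q * 1 := by rw [h2]; ring
      _ = q * |t| ^ (q - 1) * (SignType.sign t : ℝ) * t + |t| ^ q * 1 := by
          rw [mul_assoc (q * |t| ^ (q-1)), hsign]; ring

lemma abs_convex_bound {a b t : ℝ} (ht : t ∈ Icc (0:ℝ) 1) :
    |b + t * (a - b)| ≤ |a| ⊔ |b| := by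
  have h : b + t * (a - b) = (1 - t) * b + t * a := by ring
  rw [h]
  calc |(1 - t) * b + t * a| ≤ |(1 - t) * b| + |t * a| := abs_add_le _ _
    _ = (1 - t) * |b| + t * |a| := by
        rw [abs_mul, abs_mul, abs_of_nonneg (by linarith [ht.2]), abs_of_nonneg ht.1]
    _ ≤ (1 - t) * (|a| ⊔ |b|) + t * (|a| ⊔ |b|) := by
        gcongr
        · linarith [ht.2]
        · exact le_max_right _ _
        · exact ht.1
        · exact le_max_left _ _
    _ = |a| ⊔ |b| := by ring

/-- Lipschitz-type estimate for `s ↦ |s|^q * s`. -/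
lemma abs_rpow_mul_self_sub_le {q : ℝ} (hq : 0 ≤ q) (a b : ℝ) :
    |(|a| ^ q * a - |b| ^ q * b)| ≤ (q + 1) * (|a| ⊔ |b|) ^ q * |a - b| := by
  set f : ℝ → ℝ := fun t => |b + t * (a - b)| ^ q * (b + t * (a - b)) with hf
  have key : ‖f 1 - f 0‖ ≤ (q + 1) * (|a| ⊔ |b|) ^ q * |a - b| := by
    apply norm_image_sub_le_of_norm_deriv_le_segment_01'
      (f' := fun t => (q + 1) * |b + t * (a - b)| ^ q * (a - b))
    · intro t _
      have h1 : HasDerivAt (fun t : ℝ => b + t * (a - b)) (a - b) t := by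
        simpa using ((hasDerivAt_id t).mul_const (a - b)).const_add b
      have h2 := (hasDerivAt_abs_rpow_mul_self hq (b + t * (a - b))).comp t h1
      exact h2.hasDerivWithinAt
    · intro t ht
      have ht' : t ∈ Icc (0:ℝ) 1 := ⟨ht.1, ht.2.le⟩
      have hc := abs_convex_bound (a := a) (b := b) ht'
      have : |b + t * (a - b)| ^ q ≤ (|a| ⊔ |b|) ^ q :=
        Real.rpow_le_rpow (abs_nonneg _) hc hq
      have heq : ‖(q + 1) * |b + t * (a - b)| ^ q * (a - b)‖
          = (q + 1) * |b + t * (a - b)| ^ q * |a - b| := by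
        rw [Real.norm_eq_abs, abs_mul, abs_mul, abs_of_nonneg (by positivity : (0:ℝ) ≤ q + 1),
          abs_of_nonneg (by positivity : (0:ℝ) ≤ |b + t * (a - b)| ^ q)]
      rw [heq]
      gcongr
  have h0 : f 0 = |b| ^ q * b := by simp [hf]
  have h1 : f 1 = |a| ^ q * a := by simp [hf]
  rw [h0, h1] at key
  simpa using key

/-- Taylor estimate for `|·|^p`, `p ≥ 2`. -/
lemma abs_rpow_taylor {p : ℝ} (hp : 2 ≤ p) (a b : ℝ) :
    |(|a + b| ^ p - |a| ^ p - p * |a| ^ (p - 2) * a * b)|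
      ≤ p * (p - 1) * (|a| + |b|) ^ (p - 2) * b ^ 2 := by
  have hp1 : (1:ℝ) < p := by linarith
  have hq : (0:ℝ) ≤ p - 2 := by linarith
  set g : ℝ → ℝ := fun t => |a + t * b| ^ p - t * (p * |a| ^ (p - 2) * a * b) with hg
  have key : ‖g 1 - g 0‖ ≤ p * (p - 1) * (|a| + |b|) ^ (p - 2) * b ^ 2 := by
    apply norm_image_sub_le_of_norm_deriv_le_segment_01'
      (f' := fun t => p * |a + t * b| ^ (p - 2) * (a + t * b) * b - p * |a| ^ (p - 2) * a * b)
    · intro t _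
      have h1 : HasDerivAt (fun t : ℝ => a + t * b) b t := by
        simpa using ((hasDerivAt_id t).mul_const b).const_add a
      have h2 := ((hasDerivAt_abs_rpow (a + t * b) hp1).comp t h1).sub
        ((hasDerivAt_id t).mul_const (p * |a| ^ (p - 2) * a * b))
      have h3 : (p * |a + t * b| ^ (p - 2) * (a + t * b)) * b - 1 * (p * |a| ^ (p - 2) * a * b)
          = p * |a + t * b| ^ (p - 2) * (a + t * b) * b - p * |a| ^ (p - 2) * a * b := by ring
      rw [h3] at h2
      exact h2.hasDerivWithinAt
    · intro t ht
      have ht0 := ht.1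
      have ht1 := ht.2.le
      have hmax : |a + t * b| ⊔ |a| ≤ |a| + |b| := by
        apply max_le
        · calc |a + t * b| ≤ |a| + |t * b| := abs_add_le _ _
            _ ≤ |a| + |b| := by
                rw [abs_mul, abs_of_nonneg ht0]
                nlinarith [abs_nonneg b]
        · linarith [abs_nonneg b]
      have hkey := abs_rpow_mul_self_sub_le hq (a + t * b) a
      have htb : (a + t * b) - a = t * b := by ring
      rw [htb] at hkey
      have heq : p * |a + t * b| ^ (p - 2) * (a + t * b) * b - p * |a| ^ (p - 2) * a * b
          = p * b * (|a + t * b| ^ (p - 2) * (a + t * b) - |a| ^ (p - 2) * a) := by ring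
      rw [Real.norm_eq_abs, heq, abs_mul]
      have hp0 : (0:ℝ) ≤ p := by linarith
      calc |p * b| * |(|a + t * b| ^ (p - 2) * (a + t * b) - |a| ^ (p - 2) * a)|
          ≤ |p * b| * ((p - 2 + 1) * (|a + t * b| ⊔ |a|) ^ (p - 2) * |t * b|) :=
            mul_le_mul_of_nonneg_left hkey (abs_nonneg _)
        _ ≤ (p * |b|) * ((p - 1) * (|a| + |b|) ^ (p - 2) * |b|) := by
            rw [abs_mul, abs_of_nonneg hp0]
            have h4 : (|a + t * b| ⊔ |a|) ^ (p - 2) ≤ (|a| + |b|) ^ (p - 2) :=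
              Real.rpow_le_rpow (le_trans (abs_nonneg _) (le_max_left _ _)) hmax hq
            have h5 : |t * b| ≤ |b| := by
              rw [abs_mul, abs_of_nonneg ht0]
              nlinarith [abs_nonneg b]
            have h6 : p - 2 + 1 = p - 1 := by ring
            rw [h6]
            have hA : (p - 1) * (|a + t * b| ⊔ |a|) ^ (p - 2) * |t * b|
                ≤ (p - 1) * (|a| + |b|) ^ (p - 2) * |b| := by
              apply mul_le_mul (mul_le_mul_of_nonneg_left h4 (by linarith)) h5 (abs_nonneg _)
              exact mul_nonneg (by linarith) (Real.rpow_nonneg (by positivity) _)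
            exact mul_le_mul_of_nonneg_left hA (mul_nonneg hp0 (abs_nonneg b))
        _ = p * (p - 1) * (|a| + |b|) ^ (p - 2) * b ^ 2 := by
            have hb2 : b ^ 2 = |b| * |b| := by rw [abs_mul_abs_self, sq]
            rw [hb2]; ring
  have h0 : g 0 = |a| ^ p := by simp [hg]
  have h1 : g 1 = |a + b| ^ p - p * |a| ^ (p - 2) * a * b := by simp [hg]
  rw [h0, h1] at key
  have hre : |a + b| ^ p - |a| ^ p - p * |a| ^ (p - 2) * a * b
      = (|a + b| ^ p - p * |a| ^ (p - 2) * a * b) - |a| ^ p := by ring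
  rw [hre, ← Real.norm_eq_abs]
  exact key


variable {Ω : Type*} [MeasurableSpace Ω] {μ : Measure Ω} {p : ℝ}

lemma aesm_abs_rpow {q : ℝ} (hq : 0 ≤ q) {f : Ω → ℝ} (hf : AEStronglyMeasurable f μ) :
    AEStronglyMeasurable (fun x => |f x| ^ q) μ :=
  ((Real.continuous_rpow_const hq).comp continuous_abs).comp_aestronglyMeasurable hf

lemma holder_old {f g : Ω → ℝ} {p q r : ℝ≥0∞} (hf : AEStronglyMeasurable f μ)
    (hg : AEStronglyMeasurable g μ) (b : ℝ → ℝ → ℝ)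
    (h : ∀ᵐ x ∂μ, ‖b (f x) (g x)‖₊ ≤ ‖f x‖₊ * ‖g x‖₊) (hpqr : 1 / r = 1 / p + 1 / q) :
    eLpNorm (fun x => b (f x) (g x)) r μ ≤ eLpNorm f p μ * eLpNorm g q μ := by
  haveI : ENNReal.HolderTriple p q r := ⟨by simpa [one_div] using hpqr.symm⟩
  simpa using eLpNorm_le_eLpNorm_mul_eLpNorm_of_nnnorm hf hg b 1 (by simpa using h)

lemma conj_eq (hp : 2 ≤ p) :
    (1 : ℝ≥0∞) / 1 = 1 / ENNReal.ofReal (p / (p - 1)) + 1 / ENNReal.ofReal p := by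
  have h1 : (0:ℝ) < p - 1 := by linarith
  have h0 : (0:ℝ) < p := by linarith
  rw [one_div, one_div, one_div, ← ENNReal.ofReal_inv_of_pos (by positivity),
    ← ENNReal.ofReal_inv_of_pos h0, inv_div,
    ← ENNReal.ofReal_add (by positivity) (by positivity)]
  have : (p - 1) / p + p⁻¹ = 1 := by field_simp; ring
  rw [this, ENNReal.ofReal_one, inv_one]

/-- `|f|^(p-2) * f ∈ L^{p'}` with norm `(eLpNorm f p)^(p-1)`. -/
lemma eLpNorm_h_eq (hp : 2 ≤ p) {f : Ω → ℝ} :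
    eLpNorm (fun x => |f x| ^ (p - 2) * f x) (ENNReal.ofReal (p / (p - 1))) μ
      = eLpNorm f (ENNReal.ofReal p) μ ^ (p - 1) := by
  have h1 : (0:ℝ) < p - 1 := by linarith
  have h0 : (0:ℝ) < p := by linarith
  have habs : ∀ a : ℝ, |(|a| ^ (p - 2) * a)| = |a| ^ (p - 1) := by
    intro a
    rcases eq_or_ne a 0 with rfl | ha
    · simp [Real.zero_rpow h1.ne', Real.zero_rpow (by linarith : p - 2 + 2 ≠ 0)]
    · rw [abs_mul, abs_of_nonneg (Real.rpow_nonneg (abs_nonneg a) _),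
        ← Real.rpow_add_one (abs_ne_zero.2 ha)]
      ring_nf
  have hcongr : eLpNorm (fun x => |f x| ^ (p - 2) * f x) (ENNReal.ofReal (p / (p - 1))) μ
      = eLpNorm (fun x => ‖f x‖ ^ (p - 1)) (ENNReal.ofReal (p / (p - 1))) μ := by
    apply eLpNorm_congr_norm_ae
    filter_upwards with x
    have h2 : ‖|f x| ^ (p - 2) * f x‖ = |f x| ^ (p - 1) := by
      rw [Real.norm_eq_abs]; exact habs _
    have h3 : ‖‖f x‖ ^ (p - 1)‖ = |f x| ^ (p - 1) := by
      rw [Real.norm_eq_abs, Real.norm_eq_abs, abs_of_nonneg (Real.rpow_nonneg (abs_nonneg _) _)]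
    rw [h2, h3]
  rw [hcongr, eLpNorm_norm_rpow f h1]
  congr 1
  rw [← ENNReal.ofReal_mul (by positivity)]
  congr 1
  field_simp

lemma pairing (hp : 2 ≤ p) {f g : Ω → ℝ} (hf : MemLp f (ENNReal.ofReal p) μ)
    (hg : MemLp g (ENNReal.ofReal p) μ) :
    Integrable (fun x => |f x| ^ (p - 2) * f x * g x) μ ∧
    |∫ x, |f x| ^ (p - 2) * f x * g x ∂μ|
      ≤ (eLpNorm f (ENNReal.ofReal p) μ).toReal ^ (p - 1)
        * (eLpNorm g (ENNReal.ofReal p) μ).toReal := by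
  have hq : (0:ℝ) ≤ p - 2 := by linarith
  have hp1 : (0:ℝ) ≤ p - 1 := by linarith
  set h : Ω → ℝ := fun x => |f x| ^ (p - 2) * f x with hh
  have hmh : AEStronglyMeasurable h μ := (aesm_abs_rpow hq hf.1).mul hf.1
  have help : eLpNorm h (ENNReal.ofReal (p / (p - 1))) μ
      = eLpNorm f (ENNReal.ofReal p) μ ^ (p - 1) := eLpNorm_h_eq hp
  have hHolder : eLpNorm (fun x => h x * g x) 1 μ
      ≤ eLpNorm h (ENNReal.ofReal (p / (p - 1))) μ * eLpNorm g (ENNReal.ofReal p) μ :=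
    holder_old hmh hg.1 (· * ·)
      (Filter.Eventually.of_forall fun x => (nnnorm_mul _ _).le) (conj_eq hp)
  have hfin : eLpNorm h (ENNReal.ofReal (p / (p - 1))) μ * eLpNorm g (ENNReal.ofReal p) μ < ⊤ := by
    rw [help]
    exact ENNReal.mul_lt_top (ENNReal.rpow_lt_top_of_nonneg hp1 hf.2.ne) hg.2
  have hint : Integrable (fun x => h x * g x) μ :=
    memLp_one_iff_integrable.1 ⟨hmh.mul hg.1, lt_of_le_of_lt hHolder hfin⟩
  refine ⟨hint, ?_⟩
  have h1 : |∫ x, h x * g x ∂μ| ≤ ∫ x, ‖h x * g x‖ ∂μ := by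
    rw [← Real.norm_eq_abs]
    exact norm_integral_le_integral_norm _
  have h2 : ∫ x, ‖h x * g x‖ ∂μ = (eLpNorm (fun x => h x * g x) 1 μ).toReal := by
    rw [integral_norm_eq_lintegral_enorm (f := fun x => h x * g x) (hmh.mul hg.1),
      eLpNorm_one_eq_lintegral_enorm]
  have h3 := ENNReal.toReal_mono hfin.ne hHolder
  rw [help, ENNReal.toReal_mul, ← ENNReal.toReal_rpow] at h3
  calc |∫ x, h x * g x ∂μ| ≤ (eLpNorm (fun x => h x * g x) 1 μ).toReal := by rw [← h2]; exact h1
    _ ≤ _ := h3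

lemma eLpNorm_sum_abs_le (hp : 2 ≤ p) {F G : Ω → ℝ} (hF : AEStronglyMeasurable F μ)
    (hG : AEStronglyMeasurable G μ) :
    eLpNorm (fun x => |F x| + |G x|) (ENNReal.ofReal p) μ
      ≤ eLpNorm F (ENNReal.ofReal p) μ + eLpNorm G (ENNReal.ofReal p) μ := by
  have h1 : (1:ℝ≥0∞) ≤ ENNReal.ofReal p := by
    rw [← ENNReal.ofReal_one]
    exact ENNReal.ofReal_le_ofReal (by linarith)
  have e1 : (fun x => |F x|) = fun x => ‖F x‖ := by funext x; rw [Real.norm_eq_abs]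
  have e2 : (fun x => |G x|) = fun x => ‖G x‖ := by funext x; rw [Real.norm_eq_abs]
  calc eLpNorm (fun x => |F x| + |G x|) (ENNReal.ofReal p) μ
      = eLpNorm ((fun x => |F x|) + fun x => |G x|) (ENNReal.ofReal p) μ := rfl
    _ ≤ eLpNorm (fun x => |F x|) (ENNReal.ofReal p) μ
        + eLpNorm (fun x => |G x|) (ENNReal.ofReal p) μ :=
        eLpNorm_add_le hF.norm hG.norm h1
    _ = _ := by rw [e1, e2, eLpNorm_norm, eLpNorm_norm]

lemma holder3 (hp : 2 ≤ p) {F G W Z : Ω → ℝ} (hF : AEStronglyMeasurable F μ)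
    (hG : AEStronglyMeasurable G μ) (hW : AEStronglyMeasurable W μ)
    (hZ : AEStronglyMeasurable Z μ) :
    eLpNorm (fun x => (|F x| + |G x|) ^ (p - 2) * (W x * Z x)) 1 μ
      ≤ eLpNorm (fun x => |F x| + |G x|) (ENNReal.ofReal p) μ ^ (p - 2)
        * (eLpNorm W (ENNReal.ofReal p) μ * eLpNorm Z (ENNReal.ofReal p) μ) := by
  have h0 : (0:ℝ) < p := by linarith
  have hq : (0:ℝ) ≤ p - 2 := by linarith
  set S : Ω → ℝ := fun x => |F x| + |G x| with hS
  have hmS : AEStronglyMeasurable S μ := hF.norm.add hG.norm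
  have hmSq : AEStronglyMeasurable (fun x => S x ^ (p - 2)) μ := by
    have : (fun x => S x ^ (p - 2)) = fun x => |S x| ^ (p - 2) := by
      funext x
      rw [abs_of_nonneg (by positivity : (0:ℝ) ≤ S x)]
    rw [this]
    exact aesm_abs_rpow hq hmS
  set r : ℝ≥0∞ := (ENNReal.ofReal ((p - 2) / p))⁻¹ with hr
  set s : ℝ≥0∞ := ENNReal.ofReal (p / 2) with hs
  -- exponent arithmetic
  have hsplit1 : (1:ℝ≥0∞) / 1 = 1 / r + 1 / s := by
    rw [one_div r, one_div s, hr, inv_inv, hs, ← ENNReal.ofReal_inv_of_pos (by positivity)]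
    have h2 : (p / 2)⁻¹ = 2 / p := by field_simp
    rw [h2, ← ENNReal.ofReal_add (by positivity) (by positivity)]
    have h3 : (p - 2) / p + 2 / p = 1 := by field_simp; ring
    rw [h3, ENNReal.ofReal_one]
    simp
  have hsplit2 : 1 / s = 1 / ENNReal.ofReal p + 1 / ENNReal.ofReal p := by
    rw [one_div s, hs, ← ENNReal.ofReal_inv_of_pos (by positivity), one_div,
      ← ENNReal.ofReal_inv_of_pos h0, ← ENNReal.ofReal_add (by positivity) (by positivity)]
    congr 1
    field_simp
    ring
  -- WZ part
  have hWZ : eLpNorm (fun x => W x * Z x) s μ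
      ≤ eLpNorm W (ENNReal.ofReal p) μ * eLpNorm Z (ENNReal.ofReal p) μ :=
    holder_old hW hZ (· * ·)
      (Filter.Eventually.of_forall fun x => (nnnorm_mul _ _).le) hsplit2
  -- S^(p-2) part
  have hSq : eLpNorm (fun x => S x ^ (p - 2)) r μ
      ≤ eLpNorm S (ENNReal.ofReal p) μ ^ (p - 2) := by
    rcases eq_or_lt_of_le hp with hp2 | hp2
    · have hr_top : r = ⊤ := by
        rw [hr, ← hp2]
        norm_num
      have hfun : (fun x => S x ^ (p - 2)) = fun _ => (1:ℝ) := by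
        funext x
        rw [← hp2]
        norm_num
      rw [hr_top, hfun, ← hp2, eLpNorm_exponent_top]
      have hb : eLpNormEssSup (fun _ : Ω => (1:ℝ)) μ ≤ ENNReal.ofReal 1 :=
        eLpNormEssSup_le_of_ae_bound (Filter.Eventually.of_forall fun x => by norm_num)
      norm_num at hb ⊢
      exact hb.trans_eq (by norm_num [ENNReal.rpow_zero])
    · have hq2 : (0:ℝ) < p - 2 := by linarith
      have hr_eq : r = ENNReal.ofReal (p / (p - 2)) := by
        rw [hr, ← ENNReal.ofReal_inv_of_pos (by positivity), inv_div]
      have hfun : (fun x => S x ^ (p - 2)) = fun x => ‖S x‖ ^ (p - 2) := by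
        funext x
        rw [Real.norm_eq_abs, abs_of_nonneg (by positivity : (0:ℝ) ≤ S x)]
      rw [hfun, eLpNorm_norm_rpow S hq2, hr_eq, ← ENNReal.ofReal_mul (by positivity)]
      have : p / (p - 2) * (p - 2) = p := by field_simp
      rw [this]
  -- combine
  have hcomb : eLpNorm (fun x => S x ^ (p - 2) * (W x * Z x)) 1 μ
      ≤ eLpNorm (fun x => S x ^ (p - 2)) r μ * eLpNorm (fun x => W x * Z x) s μ :=
    holder_old hmSq (hW.mul hZ) (· * ·)
      (Filter.Eventually.of_forall fun x => (nnnorm_mul _ _).le) hsplit1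
  exact hcomb.trans (mul_le_mul' hSq hWZ)

/-- Integrability and integral bound for the Hölder triple product. -/
lemma holder3_int (hp : 2 ≤ p) {F G W Z : Ω → ℝ}
    (hF : MemLp F (ENNReal.ofReal p) μ) (hG : MemLp G (ENNReal.ofReal p) μ)
    (hW : MemLp W (ENNReal.ofReal p) μ) (hZ : MemLp Z (ENNReal.ofReal p) μ) :
    Integrable (fun x => (|F x| + |G x|) ^ (p - 2) * (W x * Z x)) μ ∧
    ∫ x, ‖(|F x| + |G x|) ^ (p - 2) * (W x * Z x)‖ ∂μ
      ≤ ((eLpNorm F (ENNReal.ofReal p) μ).toReal + (eLpNorm G (ENNReal.ofReal p) μ).toReal)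
          ^ (p - 2)
        * ((eLpNorm W (ENNReal.ofReal p) μ).toReal * (eLpNorm Z (ENNReal.ofReal p) μ).toReal) := by
  have hq : (0:ℝ) ≤ p - 2 := by linarith
  have hmS : AEStronglyMeasurable (fun x => |F x| + |G x|) μ := hF.1.norm.add hG.1.norm
  have hmSq : AEStronglyMeasurable (fun x => (|F x| + |G x|) ^ (p - 2)) μ := by
    have heq : (fun x => (|F x| + |G x|) ^ (p - 2)) = fun x => abs (|F x| + |G x|) ^ (p - 2) := by
      funext x; rw [abs_of_nonneg (show (0:ℝ) ≤ |F x| + |G x| by positivity)]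
    rw [heq]; exact aesm_abs_rpow hq hmS
  have hmY : AEStronglyMeasurable (fun x => (|F x| + |G x|) ^ (p - 2) * (W x * Z x)) μ :=
    hmSq.mul (hW.1.mul hZ.1)
  have hS_le := eLpNorm_sum_abs_le hp hF.1 hG.1
  have hS_fin : eLpNorm (fun x => |F x| + |G x|) (ENNReal.ofReal p) μ < ⊤ :=
    lt_of_le_of_lt hS_le (ENNReal.add_lt_top.2 ⟨hF.2, hG.2⟩)
  have hbound := holder3 hp hF.1 hG.1 hW.1 hZ.1
  have hRHS_fin : eLpNorm (fun x => |F x| + |G x|) (ENNReal.ofReal p) μ ^ (p - 2)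
      * (eLpNorm W (ENNReal.ofReal p) μ * eLpNorm Z (ENNReal.ofReal p) μ) < ⊤ :=
    ENNReal.mul_lt_top (ENNReal.rpow_lt_top_of_nonneg hq hS_fin.ne)
      (ENNReal.mul_lt_top hW.2 hZ.2)
  have hint : Integrable (fun x => (|F x| + |G x|) ^ (p - 2) * (W x * Z x)) μ :=
    memLp_one_iff_integrable.1 ⟨hmY, lt_of_le_of_lt hbound hRHS_fin⟩
  refine ⟨hint, ?_⟩
  have h2 : ∫ x, ‖(|F x| + |G x|) ^ (p - 2) * (W x * Z x)‖ ∂μ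
      = (eLpNorm (fun x => (|F x| + |G x|) ^ (p - 2) * (W x * Z x)) 1 μ).toReal := by
    rw [integral_norm_eq_lintegral_enorm
      (f := fun x => (|F x| + |G x|) ^ (p - 2) * (W x * Z x)) hmY,
      eLpNorm_one_eq_lintegral_enorm]
  have h3 := ENNReal.toReal_mono hRHS_fin.ne hbound
  have h4 := ENNReal.toReal_mono (ENNReal.rpow_lt_top_of_nonneg hq
    (ENNReal.add_lt_top.2 ⟨hF.2, hG.2⟩).ne).ne
    (ENNReal.rpow_le_rpow hS_le hq)
  rw [ENNReal.toReal_mul, ENNReal.toReal_mul, ← ENNReal.toReal_rpow, ← ENNReal.toReal_rpow,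
    ENNReal.toReal_add hF.2.ne hG.2.ne] at *
  rw [h2]
  calc (eLpNorm (fun x => (|F x| + |G x|) ^ (p - 2) * (W x * Z x)) 1 μ).toReal
      ≤ (eLpNorm (fun x => |F x| + |G x|) (ENNReal.ofReal p) μ).toReal ^ (p - 2)
        * ((eLpNorm W (ENNReal.ofReal p) μ).toReal
          * (eLpNorm Z (ENNReal.ofReal p) μ).toReal) := h3
    _ ≤ _ := by
        apply mul_le_mul_of_nonneg_right h4
        positivity

lemma eLpNorm_abs {q : ℝ≥0∞} {h : Ω → ℝ} : eLpNorm (fun x => |h x|) q μ = eLpNorm h q μ := by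
  have : (fun x => |h x|) = fun x => ‖h x‖ := by funext x; rw [Real.norm_eq_abs]
  rw [this, eLpNorm_norm]

lemma memℒp_abs {q : ℝ≥0∞} {h : Ω → ℝ} (hh : MemLp h q μ) :
    MemLp (fun x => |h x|) q μ := by
  refine ⟨hh.1.norm.congr ?_, ?_⟩
  · filter_upwards with x using (Real.norm_eq_abs _).symm
  · rw [eLpNorm_abs]; exact hh.2

lemma integrable_abs_rpow (hp : 2 ≤ p) {f : Ω → ℝ} (hf : MemLp f (ENNReal.ofReal p) μ) :
    Integrable (fun x => |f x| ^ p) μ := by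
  have hp0 : (0:ℝ) < p := by linarith
  have h := hf.integrable_norm_rpow (by simp [hp0]) ENNReal.ofReal_ne_top
  have heq : (fun x => ‖f x‖ ^ (ENNReal.ofReal p).toReal) = fun x => |f x| ^ p := by
    funext x; rw [ENNReal.toReal_ofReal hp0.le, Real.norm_eq_abs]
  rwa [heq] at h

/-- Quantitative Taylor estimate for the `p`-power functional. -/
lemma taylor_fn (hp : 2 ≤ p) {f g : Ω → ℝ}
    (hf : MemLp f (ENNReal.ofReal p) μ) (hg : MemLp g (ENNReal.ofReal p) μ) :
    |∫ x, |f x + g x| ^ p ∂μ - ∫ x, |f x| ^ p ∂μ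
        - p * ∫ x, |f x| ^ (p - 2) * f x * g x ∂μ|
      ≤ p * (p - 1)
          * ((eLpNorm f (ENNReal.ofReal p) μ).toReal + (eLpNorm g (ENNReal.ofReal p) μ).toReal)
            ^ (p - 2)
          * (eLpNorm g (ENNReal.ofReal p) μ).toReal ^ 2 := by
  have hp0 : (0:ℝ) < p := by linarith
  have int1 : Integrable (fun x => |f x + g x| ^ p) μ := by
    have h := integrable_abs_rpow hp (hf.add hg)
    exact h.congr (by filter_upwards with x using rfl)
  have int2 : Integrable (fun x => |f x| ^ p) μ := integrable_abs_rpow hp hf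
  have int3 : Integrable (fun x => |f x| ^ (p - 2) * f x * g x) μ := (pairing hp hf hg).1
  set X : Ω → ℝ := fun x =>
    |f x + g x| ^ p - |f x| ^ p - p * (|f x| ^ (p - 2) * f x * g x) with hX
  have intX : Integrable X μ := (int1.sub int2).sub (int3.const_mul p)
  have hIX : ∫ x, X x ∂μ = ∫ x, |f x + g x| ^ p ∂μ - ∫ x, |f x| ^ p ∂μ
      - p * ∫ x, |f x| ^ (p - 2) * f x * g x ∂μ := by
    have int12 : Integrable (fun x => |f x + g x| ^ p - |f x| ^ p) μ := int1.sub int2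
    have int3' : Integrable (fun x => p * (|f x| ^ (p - 2) * f x * g x)) μ := int3.const_mul p
    rw [hX]
    rw [integral_sub int12 int3', integral_sub int1 int2, integral_const_mul]
  obtain ⟨hY_int, hY_bnd⟩ := holder3_int hp hf hg hg hg
  have hptwise : ∀ x, ‖X x‖ ≤ p * (p - 1) * ((|f x| + |g x|) ^ (p - 2) * (g x * g x)) := by
    intro x
    have h := abs_rpow_taylor hp (f x) (g x)
    rw [Real.norm_eq_abs, hX]
    calc |(|f x + g x| ^ p - |f x| ^ p - p * (|f x| ^ (p - 2) * f x * g x))|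
        = |(|f x + g x| ^ p - |f x| ^ p - p * |f x| ^ (p - 2) * f x * g x)| := by ring_nf
      _ ≤ p * (p - 1) * (|f x| + |g x|) ^ (p - 2) * g x ^ 2 := h
      _ = p * (p - 1) * ((|f x| + |g x|) ^ (p - 2) * (g x * g x)) := by ring
  have h1 : |∫ x, X x ∂μ| ≤ ∫ x, ‖X x‖ ∂μ := by
    rw [← Real.norm_eq_abs]; exact norm_integral_le_integral_norm _
  have h2 : ∫ x, ‖X x‖ ∂μ
      ≤ ∫ x, p * (p - 1) * ((|f x| + |g x|) ^ (p - 2) * (g x * g x)) ∂μ :=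
    integral_mono intX.norm (hY_int.const_mul _) hptwise
  have h3 : ∫ x, p * (p - 1) * ((|f x| + |g x|) ^ (p - 2) * (g x * g x)) ∂μ
      = p * (p - 1) * ∫ x, (|f x| + |g x|) ^ (p - 2) * (g x * g x) ∂μ :=
    integral_const_mul _ _
  have h4 : ∫ x, (|f x| + |g x|) ^ (p - 2) * (g x * g x) ∂μ
      ≤ ∫ x, ‖(|f x| + |g x|) ^ (p - 2) * (g x * g x)‖ ∂μ :=
    integral_mono hY_int hY_int.norm (fun x => le_abs_self _)
  have hconst : (0:ℝ) ≤ p * (p - 1) := by nlinarith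
  calc |∫ x, |f x + g x| ^ p ∂μ - ∫ x, |f x| ^ p ∂μ
        - p * ∫ x, |f x| ^ (p - 2) * f x * g x ∂μ|
      = |∫ x, X x ∂μ| := by rw [hIX]
    _ ≤ ∫ x, ‖X x‖ ∂μ := h1
    _ ≤ p * (p - 1) * ∫ x, (|f x| + |g x|) ^ (p - 2) * (g x * g x) ∂μ := by
        rw [← h3]; exact h2
    _ ≤ p * (p - 1) * (((eLpNorm f (ENNReal.ofReal p) μ).toReal
          + (eLpNorm g (ENNReal.ofReal p) μ).toReal) ^ (p - 2)
        * ((eLpNorm g (ENNReal.ofReal p) μ).toReal * (eLpNorm g (ENNReal.ofReal p) μ).toReal)) :=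
        mul_le_mul_of_nonneg_left (h4.trans hY_bnd) hconst
    _ = _ := by ring

/-- Quantitative continuity estimate for the pairing in its first argument. -/
lemma diff_fn (hp : 2 ≤ p) {f₁ f₂ g : Ω → ℝ}
    (h₁ : MemLp f₁ (ENNReal.ofReal p) μ) (h₂ : MemLp f₂ (ENNReal.ofReal p) μ)
    (hg : MemLp g (ENNReal.ofReal p) μ) :
    |(∫ x, |f₁ x| ^ (p - 2) * f₁ x * g x ∂μ) - ∫ x, |f₂ x| ^ (p - 2) * f₂ x * g x ∂μ|
      ≤ (p - 1)
        * ((eLpNorm f₁ (ENNReal.ofReal p) μ).toReal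
            + (eLpNorm f₂ (ENNReal.ofReal p) μ).toReal) ^ (p - 2)
        * (eLpNorm (fun x => f₁ x - f₂ x) (ENNReal.ofReal p) μ).toReal
        * (eLpNorm g (ENNReal.ofReal p) μ).toReal := by
  have hq : (0:ℝ) ≤ p - 2 := by linarith
  have i1 : Integrable (fun x => |f₁ x| ^ (p - 2) * f₁ x * g x) μ := (pairing hp h₁ hg).1
  have i2 : Integrable (fun x => |f₂ x| ^ (p - 2) * f₂ x * g x) μ := (pairing hp h₂ hg).1
  have hsub : MemLp (fun x => f₁ x - f₂ x) (ENNReal.ofReal p) μ := h₁.sub h₂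
  have hW : MemLp (fun x => |f₁ x - f₂ x|) (ENNReal.ofReal p) μ := memℒp_abs hsub
  have hZ : MemLp (fun x => |g x|) (ENNReal.ofReal p) μ := memℒp_abs hg
  obtain ⟨hY_int, hY_bnd⟩ := holder3_int hp h₁ h₂ hW hZ
  set D : Ω → ℝ := fun x => |f₁ x| ^ (p - 2) * f₁ x * g x - |f₂ x| ^ (p - 2) * f₂ x * g x with hD
  have intD : Integrable D μ := i1.sub i2
  have hID : ∫ x, D x ∂μ
      = (∫ x, |f₁ x| ^ (p - 2) * f₁ x * g x ∂μ) - ∫ x, |f₂ x| ^ (p - 2) * f₂ x * g x ∂μ :=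
    integral_sub i1 i2
  have hptwise : ∀ x, ‖D x‖
      ≤ (p - 1) * ((|f₁ x| + |f₂ x|) ^ (p - 2) * (|f₁ x - f₂ x| * |g x|)) := by
    intro x
    have h := abs_rpow_mul_self_sub_le hq (f₁ x) (f₂ x)
    have hmax : (|f₁ x| ⊔ |f₂ x|) ^ (p - 2) ≤ (|f₁ x| + |f₂ x|) ^ (p - 2) :=
      Real.rpow_le_rpow (le_trans (abs_nonneg _) (le_max_left _ _))
        (max_le (le_add_of_nonneg_right (abs_nonneg _)) (le_add_of_nonneg_left (abs_nonneg _))) hq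
    have heq : D x = (|f₁ x| ^ (p - 2) * f₁ x - |f₂ x| ^ (p - 2) * f₂ x) * g x := by
      rw [hD]; ring
    rw [Real.norm_eq_abs, heq, abs_mul]
    have hq1 : p - 2 + 1 = p - 1 := by ring
    calc |(|f₁ x| ^ (p - 2) * f₁ x - |f₂ x| ^ (p - 2) * f₂ x)| * |g x|
        ≤ ((p - 2 + 1) * (|f₁ x| ⊔ |f₂ x|) ^ (p - 2) * |f₁ x - f₂ x|) * |g x| :=
          mul_le_mul_of_nonneg_right h (abs_nonneg _)
      _ ≤ ((p - 1) * (|f₁ x| + |f₂ x|) ^ (p - 2) * |f₁ x - f₂ x|) * |g x| := by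
          rw [hq1]
          apply mul_le_mul_of_nonneg_right _ (abs_nonneg _)
          apply mul_le_mul_of_nonneg_right _ (abs_nonneg _)
          exact mul_le_mul_of_nonneg_left hmax (by linarith)
      _ = (p - 1) * ((|f₁ x| + |f₂ x|) ^ (p - 2) * (|f₁ x - f₂ x| * |g x|)) := by ring
  have h1 : |∫ x, D x ∂μ| ≤ ∫ x, ‖D x‖ ∂μ := by
    rw [← Real.norm_eq_abs]; exact norm_integral_le_integral_norm _
  have h2 : ∫ x, ‖D x‖ ∂μ
      ≤ ∫ x, (p - 1) * ((|f₁ x| + |f₂ x|) ^ (p - 2) * (|f₁ x - f₂ x| * |g x|)) ∂μ :=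
    integral_mono intD.norm (hY_int.const_mul _) hptwise
  have h4 : ∫ x, (|f₁ x| + |f₂ x|) ^ (p - 2) * (|f₁ x - f₂ x| * |g x|) ∂μ
      ≤ ∫ x, ‖(|f₁ x| + |f₂ x|) ^ (p - 2) * (|f₁ x - f₂ x| * |g x|)‖ ∂μ :=
    integral_mono hY_int hY_int.norm (fun x => le_abs_self _)
  have hWe : eLpNorm (fun x => |f₁ x - f₂ x|) (ENNReal.ofReal p) μ
      = eLpNorm (fun x => f₁ x - f₂ x) (ENNReal.ofReal p) μ := eLpNorm_abs
  have hZe : eLpNorm (fun x => |g x|) (ENNReal.ofReal p) μ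
      = eLpNorm g (ENNReal.ofReal p) μ := eLpNorm_abs
  rw [hWe, hZe] at hY_bnd
  calc |(∫ x, |f₁ x| ^ (p - 2) * f₁ x * g x ∂μ) - ∫ x, |f₂ x| ^ (p - 2) * f₂ x * g x ∂μ|
      = |∫ x, D x ∂μ| := by rw [hID]
    _ ≤ ∫ x, ‖D x‖ ∂μ := h1
    _ ≤ (p - 1) * ∫ x, (|f₁ x| + |f₂ x|) ^ (p - 2) * (|f₁ x - f₂ x| * |g x|) ∂μ := by
        rw [← integral_const_mul]; exact h2
    _ ≤ (p - 1) * (((eLpNorm f₁ (ENNReal.ofReal p) μ).toReal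
          + (eLpNorm f₂ (ENNReal.ofReal p) μ).toReal) ^ (p - 2)
        * ((eLpNorm (fun x => f₁ x - f₂ x) (ENNReal.ofReal p) μ).toReal
          * (eLpNorm g (ENNReal.ofReal p) μ).toReal)) :=
        mul_le_mul_of_nonneg_left (h4.trans hY_bnd) (by linarith)
    _ = _ := by ring


section LpLevel
variable [Fact (1 ≤ ENNReal.ofReal p)]

/-- The pairing `A f g = ∫ |f|^(p-2) f g`. -/
noncomputable def A (μ : Measure Ω) (p : ℝ) (f g : Lp ℝ (ENNReal.ofReal p) μ) : ℝ :=
  ∫ x, |f x| ^ (p - 2) * f x * g x ∂μ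

lemma A_bound (hp : 2 ≤ p) (f g : Lp ℝ (ENNReal.ofReal p) μ) :
    |A μ p f g| ≤ ‖f‖ ^ (p - 1) * ‖g‖ := by
  have h := (pairing hp (Lp.memLp f) (Lp.memLp g)).2
  rwa [← Lp.norm_def, ← Lp.norm_def] at h

lemma A_add (hp : 2 ≤ p) (f g₁ g₂ : Lp ℝ (ENNReal.ofReal p) μ) :
    A μ p f (g₁ + g₂) = A μ p f g₁ + A μ p f g₂ := by
  have e : A μ p f (g₁ + g₂)
      = ∫ x, (|f x| ^ (p - 2) * f x * g₁ x + |f x| ^ (p - 2) * f x * g₂ x) ∂μ := by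
    refine integral_congr_ae ?_
    filter_upwards [Lp.coeFn_add g₁ g₂] with x hx
    rw [hx]
    simp only [Pi.add_apply]
    ring
  rw [e, integral_add (pairing hp (Lp.memLp f) (Lp.memLp g₁)).1
    (pairing hp (Lp.memLp f) (Lp.memLp g₂)).1]
  rfl

lemma A_smul (hp : 2 ≤ p) (f g : Lp ℝ (ENNReal.ofReal p) μ) (c : ℝ) :
    A μ p f (c • g) = c * A μ p f g := by
  have e : A μ p f (c • g) = ∫ x, c * (|f x| ^ (p - 2) * f x * g x) ∂μ := by
    refine integral_congr_ae ?_
    filter_upwards [Lp.coeFn_smul c g] with x hx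
    rw [hx]
    simp only [Pi.smul_apply, smul_eq_mul]
    ring
  rw [e, integral_const_mul]
  rfl

lemma A_taylor (hp : 2 ≤ p) (f g : Lp ℝ (ENNReal.ofReal p) μ) :
    |(∫ x, |(f + g : Lp ℝ (ENNReal.ofReal p) μ) x| ^ p ∂μ) - (∫ x, |f x| ^ p ∂μ)
        - p * A μ p f g|
      ≤ p * (p - 1) * (‖f‖ + ‖g‖) ^ (p - 2) * ‖g‖ ^ 2 := by
  have h := taylor_fn hp (Lp.memLp f) (Lp.memLp g)
  have e1 : ∫ x, |(f + g : Lp ℝ (ENNReal.ofReal p) μ) x| ^ p ∂μ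
      = ∫ x, |f x + g x| ^ p ∂μ := by
    refine integral_congr_ae ?_
    filter_upwards [Lp.coeFn_add f g] with x hx
    rw [hx, Pi.add_apply]
  rw [e1, A]
  rwa [← Lp.norm_def, ← Lp.norm_def] at h

lemma A_diff (hp : 2 ≤ p) (f₁ f₂ g : Lp ℝ (ENNReal.ofReal p) μ) :
    |A μ p f₁ g - A μ p f₂ g|
      ≤ (p - 1) * (‖f₁‖ + ‖f₂‖) ^ (p - 2) * ‖f₁ - f₂‖ * ‖g‖ := by
  have h := diff_fn hp (Lp.memLp f₁) (Lp.memLp f₂) (Lp.memLp g)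
  have e : eLpNorm (fun x => f₁ x - f₂ x) (ENNReal.ofReal p) μ
      = eLpNorm (⇑(f₁ - f₂)) (ENNReal.ofReal p) μ := by
    refine (eLpNorm_congr_ae ?_).symm
    filter_upwards [Lp.coeFn_sub f₁ f₂] with x hx
    rw [hx, Pi.sub_apply]
  rw [e, ← Lp.norm_def, ← Lp.norm_def, ← Lp.norm_def, ← Lp.norm_def] at h
  exact h


variable {E : Type*} [NormedAddCommGroup E] [NormedSpace ℝ E]

/-- The candidate derivative. -/
noncomputable def Phi' (hp : 2 ≤ p) (T : E →L[ℝ] Lp ℝ (ENNReal.ofReal p) μ) (u : E) :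
    E →L[ℝ] ℝ :=
  LinearMap.mkContinuous
    { toFun := fun φ => A μ p (T u) (T φ)
      map_add' := fun φ ψ => by
        show A μ p (T u) (T (φ + ψ)) = A μ p (T u) (T φ) + A μ p (T u) (T ψ)
        rw [map_add]; exact A_add hp _ _ _
      map_smul' := fun c φ => by
        show A μ p (T u) (T (c • φ)) = (RingHom.id ℝ) c • A μ p (T u) (T φ)
        rw [_root_.map_smul]
        simp only [RingHom.id_apply, smul_eq_mul]
        exact A_smul hp _ _ _ }
    (‖T u‖ ^ (p - 1) * ‖T‖)
    (fun φ => by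
      simp only [LinearMap.coe_mk, AddHom.coe_mk]
      calc ‖A μ p (T u) (T φ)‖ ≤ ‖T u‖ ^ (p - 1) * ‖T φ‖ := by
            rw [Real.norm_eq_abs]; exact A_bound hp _ _
        _ ≤ ‖T u‖ ^ (p - 1) * (‖T‖ * ‖φ‖) := by
            apply mul_le_mul_of_nonneg_left (T.le_opNorm φ) (Real.rpow_nonneg (norm_nonneg _) _)
        _ = ‖T u‖ ^ (p - 1) * ‖T‖ * ‖φ‖ := by ring)

lemma Phi'_apply (hp : 2 ≤ p) (T : E →L[ℝ] Lp ℝ (ENNReal.ofReal p) μ) (u φ : E) :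
    Phi' hp T u φ = A μ p (T u) (T φ) := rfl

lemma Phi'_cont (hp : 2 ≤ p) (T : E →L[ℝ] Lp ℝ (ENNReal.ofReal p) μ) :
    Continuous (Phi' hp T) := by
  rw [continuous_iff_continuousAt]
  intro u₀
  set K : ℝ := (p - 1) * (2 * ‖T u₀‖ + ‖T‖) ^ (p - 2) * ‖T‖ * ‖T‖ with hK
  have hK0 : 0 ≤ K := by
    apply mul_nonneg (mul_nonneg (mul_nonneg (by linarith) ?_) (norm_nonneg _)) (norm_nonneg _)
    exact Real.rpow_nonneg (by positivity) _
  apply continuousAt_of_locally_lipschitz zero_lt_one K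
  intro u hu
  rw [dist_eq_norm, dist_eq_norm]
  have hK1 : 0 ≤ K * ‖u - u₀‖ := mul_nonneg hK0 (norm_nonneg _)
  apply ContinuousLinearMap.opNorm_le_bound _ hK1
  intro φ
  have hsub : ‖T u - T u₀‖ ≤ ‖T‖ * ‖u - u₀‖ := by
    rw [← map_sub]; exact T.le_opNorm _
  have hTu : ‖T u‖ + ‖T u₀‖ ≤ 2 * ‖T u₀‖ + ‖T‖ := by
    have h1 : ‖T u‖ ≤ ‖T u₀‖ + ‖T u - T u₀‖ := by
      calc ‖T u‖ = ‖T u₀ + (T u - T u₀)‖ := by rw [add_sub_cancel]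
        _ ≤ ‖T u₀‖ + ‖T u - T u₀‖ := norm_add_le _ _
    have h2 : ‖T‖ * ‖u - u₀‖ ≤ ‖T‖ := by
      have := hu
      rw [dist_eq_norm] at this
      nlinarith [norm_nonneg T, norm_nonneg (u - u₀)]
    linarith
  calc ‖(Phi' hp T u - Phi' hp T u₀) φ‖
      = |A μ p (T u) (T φ) - A μ p (T u₀) (T φ)| := by
        rw [ContinuousLinearMap.sub_apply, Real.norm_eq_abs, Phi'_apply, Phi'_apply]
    _ ≤ (p - 1) * (‖T u‖ + ‖T u₀‖) ^ (p - 2) * ‖T u - T u₀‖ * ‖T φ‖ := A_diff hp _ _ _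
    _ ≤ (p - 1) * (2 * ‖T u₀‖ + ‖T‖) ^ (p - 2) * (‖T‖ * ‖u - u₀‖) * (‖T‖ * ‖φ‖) := by
        have hbase : (‖T u‖ + ‖T u₀‖) ^ (p - 2) ≤ (2 * ‖T u₀‖ + ‖T‖) ^ (p - 2) :=
          Real.rpow_le_rpow (by positivity) hTu (by linarith)
        apply mul_le_mul
        · apply mul_le_mul _ hsub (norm_nonneg _)
            (mul_nonneg (by linarith) (Real.rpow_nonneg (by positivity) _))
          exact mul_le_mul_of_nonneg_left hbase (by linarith)
        · exact T.le_opNorm φ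
        · exact norm_nonneg _
        · exact mul_nonneg (mul_nonneg (by linarith) (Real.rpow_nonneg (by positivity) _))
            (by positivity)
    _ = K * ‖u - u₀‖ * ‖φ‖ := by rw [hK]; ring

lemma Phi'_deriv (hp : 2 ≤ p) (T : E →L[ℝ] Lp ℝ (ENNReal.ofReal p) μ) (u : E) :
    HasFDerivAt (fun v : E => (1 / p) * ∫ x, |T v x| ^ p ∂μ) (Phi' hp T u) u := by
  have hp0 : (0:ℝ) < p := by linarith
  rw [hasFDerivAt_iff_isLittleO_nhds_zero]
  have key : ∀ w : E,
      ‖(1 / p) * (∫ x, |T (u + w) x| ^ p ∂μ) - (1 / p) * (∫ x, |T u x| ^ p ∂μ)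
        - Phi' hp T u w‖
      ≤ (p - 1) * (‖T u‖ + ‖T w‖) ^ (p - 2) * ‖T w‖ ^ 2 := by
    intro w
    have h := A_taylor hp (T u) (T w)
    have e : (∫ x, |T (u + w) x| ^ p ∂μ)
        = ∫ x, |(T u + T w : Lp ℝ (ENNReal.ofReal p) μ) x| ^ p ∂μ := by rw [← map_add]
    have lhs_eq : (1 / p) * (∫ x, |T (u + w) x| ^ p ∂μ) - (1 / p) * (∫ x, |T u x| ^ p ∂μ)
        - Phi' hp T u w
        = (1 / p) * ((∫ x, |(T u + T w : Lp ℝ (ENNReal.ofReal p) μ) x| ^ p ∂μ)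
            - (∫ x, |T u x| ^ p ∂μ) - p * A μ p (T u) (T w)) := by
      rw [Phi'_apply, ← e]
      field_simp
    rw [lhs_eq, Real.norm_eq_abs, abs_mul, abs_of_nonneg (by positivity : (0:ℝ) ≤ 1 / p)]
    calc (1 / p) * |(∫ x, |(T u + T w : Lp ℝ (ENNReal.ofReal p) μ) x| ^ p ∂μ)
          - (∫ x, |T u x| ^ p ∂μ) - p * A μ p (T u) (T w)|
        ≤ (1 / p) * (p * (p - 1) * (‖T u‖ + ‖T w‖) ^ (p - 2) * ‖T w‖ ^ 2) :=
          mul_le_mul_of_nonneg_left h (by positivity)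
      _ = (p - 1) * (‖T u‖ + ‖T w‖) ^ (p - 2) * ‖T w‖ ^ 2 := by
          field_simp
  rw [Asymptotics.isLittleO_iff]
  intro c hc
  set C : ℝ := (p - 1) * (‖T u‖ + ‖T‖) ^ (p - 2) * ‖T‖ ^ 2 + 1 with hC
  have hC1 : 0 ≤ (p - 1) * (‖T u‖ + ‖T‖) ^ (p - 2) * ‖T‖ ^ 2 :=
    mul_nonneg (mul_nonneg (by linarith) (Real.rpow_nonneg (by positivity) _)) (by positivity)
  have hCpos : 0 < C := by rw [hC]; linarith
  have hδ : 0 < min 1 (c / C) := lt_min one_pos (div_pos hc hCpos)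
  filter_upwards [Metric.closedBall_mem_nhds (0:E) hδ] with w hw
  rw [Metric.mem_closedBall, dist_zero_right] at hw
  have hw1 : ‖w‖ ≤ 1 := hw.trans (min_le_left _ _)
  have hwc : ‖w‖ ≤ c / C := hw.trans (min_le_right _ _)
  have hTw : ‖T w‖ ≤ ‖T‖ * ‖w‖ := T.le_opNorm w
  have hTw1 : ‖T w‖ ≤ ‖T‖ := by nlinarith [norm_nonneg T, norm_nonneg w, norm_nonneg (T w)]
  calc ‖(1 / p) * (∫ x, |T (u + w) x| ^ p ∂μ) - (1 / p) * (∫ x, |T u x| ^ p ∂μ)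
        - Phi' hp T u w‖
      ≤ (p - 1) * (‖T u‖ + ‖T w‖) ^ (p - 2) * ‖T w‖ ^ 2 := key w
    _ ≤ (p - 1) * (‖T u‖ + ‖T‖) ^ (p - 2) * (‖T‖ * ‖w‖) ^ 2 := by
        have hbase : (‖T u‖ + ‖T w‖) ^ (p - 2) ≤ (‖T u‖ + ‖T‖) ^ (p - 2) :=
          Real.rpow_le_rpow (by positivity) (by linarith) (by linarith)
        have hsq : ‖T w‖ ^ 2 ≤ (‖T‖ * ‖w‖) ^ 2 := by
          apply pow_le_pow_left₀ (norm_nonneg _) hTw _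
        apply mul_le_mul _ hsq (by positivity)
          (mul_nonneg (by linarith) (Real.rpow_nonneg (by positivity) _))
        exact mul_le_mul_of_nonneg_left hbase (by linarith)
    _ = ((p - 1) * (‖T u‖ + ‖T‖) ^ (p - 2) * ‖T‖ ^ 2 * ‖w‖) * ‖w‖ := by ring
    _ ≤ c * ‖w‖ := by
        apply mul_le_mul_of_nonneg_right _ (norm_nonneg w)
        calc (p - 1) * (‖T u‖ + ‖T‖) ^ (p - 2) * ‖T‖ ^ 2 * ‖w‖
            ≤ C * (c / C) := by
              apply mul_le_mul (by rw [hC]; linarith) hwc (norm_nonneg w) hCpos.le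
          _ = c := by field_simp
  -- done

end LpLevel

end PFC

/-- If `T : E → L^p(μ)` is continuous linear with `2 ≤ p < ∞`, the functional
`Φ(u) = (1/p) ∫ |Tu|^p dμ` is `C¹` with derivative `φ ↦ ∫ |Tu|^{p-2} (Tu)(Tφ) dμ`. -/
theorem power_functional_C1
    {E : Type*} [NormedAddCommGroup E] [NormedSpace ℝ E]
    {Ω : Type*} [MeasurableSpace Ω] (μ : Measure Ω)
    (p : ℝ) (hp : 2 ≤ p) [Fact (1 ≤ ENNReal.ofReal p)]
    (T : E →L[ℝ] Lp ℝ (ENNReal.ofReal p) μ) :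
    ∃ Φ' : E → (E →L[ℝ] ℝ),
      Continuous Φ' ∧
      (∀ u : E, HasFDerivAt (fun v : E => (1 / p) * ∫ x, |T v x| ^ p ∂μ) (Φ' u) u) ∧
      (∀ u φ : E, Φ' u φ = ∫ x, |T u x| ^ (p - 2) * (T u x) * (T φ x) ∂μ) := by
  exact ⟨PFC.Phi' hp T, PFC.Phi'_cont hp T, fun u => PFC.Phi'_deriv hp T u, fun u φ => rfl⟩
end

section
/- Let E be a real Hilbert space, (Ω, 𝒜, μ) a measure space with μ(Ω) < ∞, p > 2 a real number, λ ∈ ℝ, and T : E → L^p(μ) a continuous linear map. Define I : E → ℝ by I(u) = (1/2)‖u‖_E² − (λ/2)∫_Ω |Tu|² dμ − (1/p)∫_Ω |Tu|^p dμ. Suppose (u_j) is a sequence in E and k > 0 a constant such that |I(u_j)| ≤ k for all j and |⟨u_j, u_j⟩_E − λ∫_Ω (Tu_j)² dμ − ∫_Ω |Tu_j|^p dμ| ≤ k(1 + ‖u_j‖_E) for all j. Then the sequence (u_j) is bounded in E, i.e. sup_j ‖u_j‖_E < ∞. -/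
set_option maxHeartbeats 1000000


open MeasureTheory Filter Topology
open scoped InnerProductSpace

private lemma sq_le_rpow_add_one {p : ℝ} (hp : 2 ≤ p) (t : ℝ) :
    t ^ 2 ≤ |t| ^ p + 1 := by
  have h2 : |t| ^ (2:ℝ) = t ^ 2 := by
    rw [show (2:ℝ) = ((2:ℕ):ℝ) by norm_num, Real.rpow_natCast, sq_abs]
  rcases le_or_gt (|t|) 1 with h | h
  · have h1 : t ^ 2 ≤ 1 := by
      rw [← h2]
      calc |t| ^ (2:ℝ) ≤ 1 ^ (2:ℝ) :=
        Real.rpow_le_rpow (abs_nonneg t) h (by norm_num)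
      _ = 1 := by simp
    have := Real.rpow_nonneg (abs_nonneg t) p
    linarith
  · have h1 : |t| ^ (2:ℝ) ≤ |t| ^ p := Real.rpow_le_rpow_of_exponent_le h.le hp
    rw [h2] at h1
    linarith

/-- Palais–Smale type bounds imply boundedness of the sequence. -/
theorem PS_sequence_bounded
    {E : Type*} [NormedAddCommGroup E] [InnerProductSpace ℝ E] [CompleteSpace E]
    {Ω : Type*} [MeasurableSpace Ω] (μ : Measure Ω) [IsFiniteMeasure μ]
    (p : ℝ) (hp : 2 < p) [Fact (1 ≤ ENNReal.ofReal p)]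
    (lam : ℝ)
    (T : E →L[ℝ] Lp ℝ (ENNReal.ofReal p) μ)
    (I : E → ℝ)
    (hI : ∀ u : E, I u = (1 / 2) * ‖u‖ ^ 2 - (lam / 2) * ∫ x, (T u x) ^ 2 ∂μ
      - (1 / p) * ∫ x, |T u x| ^ p ∂μ)
    (u : ℕ → E) (k : ℝ) (hk : 0 < k)
    (hIbound : ∀ j, |I (u j)| ≤ k)
    (hderivbound : ∀ j,
      |⟪u j, u j⟫_ℝ - lam * ∫ x, (T (u j) x) ^ 2 ∂μ - ∫ x, |T (u j) x| ^ p ∂μ|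
        ≤ k * (1 + ‖u j‖)) :
    ∃ C : ℝ, ∀ j, ‖u j‖ ≤ C := by
  have hp0 : (0:ℝ) < p := by linarith
  set M := (μ Set.univ).toReal with hMdef
  have hM0 : 0 ≤ M := ENNReal.toReal_nonneg
  set D : ℝ := 1 / (1 - 2/p) with hDdef
  have hden : 0 < 1 - 2/p := by
    rw [sub_pos, div_lt_one hp0]; exact hp
  have hD0 : 0 < D := by positivity
  have hDinv : (1 - 2/p) * D = 1 := by
    rw [hDdef, one_div, mul_inv_cancel₀ hden.ne']
  set A : ℝ := k + |lam| * M + (1 + |lam|) * (3 * k * D) with hAdef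
  set B : ℝ := k + (1 + |lam|) * (k * D) with hBdef
  have hA0 : 0 ≤ A := by positivity
  have hB0 : 0 ≤ B := by positivity
  have key : ∀ j, ‖u j‖ ^ 2 ≤ A + B * ‖u j‖ := by
    intro j
    set N := ‖u j‖ with hN
    have hN0 : 0 ≤ N := norm_nonneg _
    set f := T (u j) with hf
    set b := ∫ x, (f x) ^ 2 ∂μ with hb
    set c := ∫ x, |f x| ^ p ∂μ with hc
    -- integrability
    have hmem : MemLp f (ENNReal.ofReal p) μ := Lp.memLp f
    have hmem2 : MemLp f 2 μ := by
      apply hmem.mono_exponent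
      rw [show (2:ENNReal) = ENNReal.ofReal 2 by simp]
      exact ENNReal.ofReal_le_ofReal hp.le
    have hint2 : Integrable (fun x => f x ^ 2) μ := hmem2.integrable_sq
    have hintp : Integrable (fun x => |f x| ^ p) μ := by
      have h1 : ENNReal.ofReal p ≠ 0 := by
        simp [ENNReal.ofReal_eq_zero, not_le, hp0]
      have := hmem.integrable_norm_rpow h1 ENNReal.ofReal_ne_top
      simpa [Real.norm_eq_abs, ENNReal.toReal_ofReal hp0.le] using this
    have hc0 : 0 ≤ c :=
      integral_nonneg fun x => Real.rpow_nonneg (abs_nonneg _) p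
    have hb0 : 0 ≤ b := integral_nonneg fun x => sq_nonneg _
    -- b ≤ c + M
    have hbc : b ≤ c + M := by
      have hmono : ∫ x, (f x) ^ 2 ∂μ ≤ ∫ x, (|f x| ^ p + 1) ∂μ :=
        integral_mono hint2 (hintp.add (integrable_const 1))
          (fun x => sq_le_rpow_add_one hp.le (f x))
      rwa [integral_add hintp (integrable_const 1), integral_const,
        smul_eq_mul, mul_one] at hmono
    -- the two bounds
    have hIb := hIbound j
    rw [hI (u j)] at hIb
    obtain ⟨hI1, hI2⟩ := abs_le.1 hIb
    have hDb := hderivbound j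
    rw [real_inner_self_eq_norm_sq] at hDb
    obtain ⟨hD1, hD2⟩ := abs_le.1 hDb
    -- c bound : c * (1 - 2/p) ≤ 3k + kN  (using 1/p * c atoms)
    have hcb : c * (1 - 2/p) ≤ 3 * k + k * N := by
      have e : c * (1 - 2/p) = c - 2 * (1/p * c) := by ring
      rw [e]
      nlinarith [hI2, hD1]
    have hcD : c ≤ (3 * k + k * N) * D := by
      have := mul_le_mul_of_nonneg_right hcb hD0.le
      calc c = c * ((1 - 2/p) * D) := by rw [hDinv, mul_one]
      _ = c * (1 - 2/p) * D := by ring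
      _ ≤ (3 * k + k * N) * D := this
    -- lam * b ≤ |lam| * (c + M)
    have hlb : lam * b ≤ |lam| * (c + M) := by
      calc lam * b ≤ |lam * b| := le_abs_self _
      _ = |lam| * |b| := abs_mul _ _
      _ = |lam| * b := by rw [abs_of_nonneg hb0]
      _ ≤ |lam| * (c + M) := by
          exact mul_le_mul_of_nonneg_left hbc (abs_nonneg lam)
    -- combine
    have hmul := mul_le_mul_of_nonneg_left hcD (by positivity : (0:ℝ) ≤ 1 + |lam|)
    nlinarith [hD2, hlb, hmul, hcD]
  refine ⟨A + B + 1, fun j => ?_⟩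
  by_contra h
  push_neg at h
  nlinarith [key j, hA0, hB0, norm_nonneg (u j)]
end

section
/- Let (Ω, 𝒜, μ) be a measure space with μ(Ω) < ∞ and let p ≥ 2 be a real number. Let (u_j) be a sequence in L^p(μ) with sup_j ‖u_j‖_p < ∞ and suppose u_j → u μ-almost everywhere on Ω for some measurable function u. Then u ∈ L^p(μ) and the sequence |u_j|^{p−2} u_j converges weakly in L^{p/(p−1)}(μ) to |u|^{p−2} u; that is, for every φ ∈ L^p(μ) one has ∫_Ω |u_j|^{p−2} u_j φ dμ → ∫_Ω |u|^{p−2} u φ dμ as j → ∞. -/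
open MeasureTheory Filter Topology
open scoped ENNReal

set_option maxHeartbeats 1000000 in
/-- Bounded in `L^p` plus a.e. convergence implies weak convergence of
`|u_j|^{p-2} u_j` to `|u|^{p-2} u` in `L^{p/(p-1)}`. -/
theorem weak_convergence_of_power
    {Ω : Type*} [MeasurableSpace Ω] (μ : Measure Ω) [IsFiniteMeasure μ]
    (p : ℝ) (hp : 2 ≤ p) [Fact (1 ≤ ENNReal.ofReal p)]
    (u : ℕ → Lp ℝ (ENNReal.ofReal p) μ)
    (C : ℝ) (hbound : ∀ j, ‖u j‖ ≤ C)
    (v : Ω → ℝ) (hv : Measurable v)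
    (hae : ∀ᵐ x ∂μ, Tendsto (fun j => u j x) atTop (𝓝 (v x))) :
    MemLp v (ENNReal.ofReal p) μ ∧
    ∀ φ : Lp ℝ (ENNReal.ofReal p) μ,
      Tendsto (fun j => ∫ x, |u j x| ^ (p - 2) * (u j x) * φ x ∂μ) atTop
        (𝓝 (∫ x, |v x| ^ (p - 2) * (v x) * φ x ∂μ)) := by
  have hp1 : (1:ℝ) < p := by linarith
  have hp0 : (0:ℝ) < p := by linarith
  have hpm1 : (0:ℝ) < p - 1 := by linarith
  have hpm2 : (0:ℝ) ≤ p - 2 := by linarith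
  have hP1 : 1 ≤ ENNReal.ofReal p := Fact.out
  have hPtop : ENNReal.ofReal p ≠ ⊤ := ENNReal.ofReal_ne_top
  have hq0 : (0:ℝ) < p / (p - 1) := div_pos hp0 hpm1
  -- the conjugate exponent relation in `ℝ≥0∞`
  have hsum : 1 / ENNReal.ofReal (p / (p - 1)) + 1 / ENNReal.ofReal p = 1 := by
    rw [one_div, one_div, ← ENNReal.ofReal_inv_of_pos hq0,
      ← ENNReal.ofReal_inv_of_pos hp0, ← ENNReal.ofReal_add (by positivity) (by positivity)]
    have h1 : (p / (p - 1))⁻¹ + p⁻¹ = 1 := by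
      rw [inv_div]
      field_simp
      ring
    rw [h1, ENNReal.ofReal_one]
  have hQP : ENNReal.ofReal (p / (p - 1)) * ENNReal.ofReal (p - 1) = ENNReal.ofReal p := by
    rw [← ENNReal.ofReal_mul hq0.le, div_mul_cancel₀ _ (ne_of_gt hpm1)]
  -- bound on norms in `ℝ≥0∞`
  have hC0 : 0 ≤ C := le_trans (norm_nonneg _) (hbound 0)
  have hub : ∀ j, eLpNorm (⇑(u j)) (ENNReal.ofReal p) μ ≤ ENNReal.ofReal C := by
    intro j
    rw [ENNReal.le_ofReal_iff_toReal_le (Lp.eLpNorm_ne_top (u j)) hC0]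
    exact (Lp.norm_def (u j)) ▸ hbound j
  -- `v` is in `L^p`
  have hvm : AEStronglyMeasurable v μ := hv.aestronglyMeasurable
  have hvel : eLpNorm v (ENNReal.ofReal p) μ ≤ ENNReal.ofReal C := by
    refine le_trans
      (Lp.eLpNorm_lim_le_liminf_eLpNorm (fun j => Lp.aestronglyMeasurable (u j)) v hae) ?_
    refine le_trans (Filter.liminf_le_liminf (Eventually.of_forall hub)) ?_
    simp
  have hvmem : MemLp v (ENNReal.ofReal p) μ :=
    ⟨hvm, lt_of_le_of_lt hvel ENNReal.ofReal_lt_top⟩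
  refine ⟨hvmem, ?_⟩
  -- the norm identity for the truncated power
  have hnorm : ∀ (w : Ω → ℝ) (x : Ω), ‖|w x| ^ (p - 2) * w x‖ = ‖w x‖ ^ (p - 1) := by
    intro w x
    rcases eq_or_ne (w x) 0 with h | h
    · simp [h, Real.zero_rpow (by linarith : p - 1 ≠ 0)]
    · have h0 : 0 < |w x| := abs_pos.mpr h
      rw [Real.norm_eq_abs, Real.norm_eq_abs, abs_mul,
        abs_of_nonneg (Real.rpow_nonneg (abs_nonneg _) _),
        show p - 1 = p - 2 + 1 by ring, Real.rpow_add h0, Real.rpow_one]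
  -- measurability of the truncated power
  have hFm : ∀ w : Ω → ℝ, AEStronglyMeasurable w μ →
      AEStronglyMeasurable (fun x => |w x| ^ (p - 2) * w x) μ := by
    intro w hw
    exact ((((Real.continuous_rpow_const hpm2).comp continuous_abs).comp_aestronglyMeasurable
      hw).mul hw)
  -- the `L^q` norm of the truncated power
  have help : ∀ w : Ω → ℝ,
      eLpNorm (fun x => |w x| ^ (p - 2) * w x) (ENNReal.ofReal (p / (p - 1))) μ
        = eLpNorm w (ENNReal.ofReal p) μ ^ (p - 1) := by
    intro w
    have h1 : eLpNorm (fun x => |w x| ^ (p - 2) * w x) (ENNReal.ofReal (p / (p - 1))) μ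
        = eLpNorm (fun x => ‖w x‖ ^ (p - 1)) (ENNReal.ofReal (p / (p - 1))) μ := by
      refine eLpNorm_congr_norm_ae (Eventually.of_forall fun x => ?_)
      rw [hnorm w x, Real.norm_of_nonneg (Real.rpow_nonneg (norm_nonneg _) _)]
    rw [h1, eLpNorm_norm_rpow w hpm1, hQP]
  have hFmem : ∀ w : Ω → ℝ, AEStronglyMeasurable w μ → MemLp w (ENNReal.ofReal p) μ →
      MemLp (fun x => |w x| ^ (p - 2) * w x) (ENNReal.ofReal (p / (p - 1))) μ := by
    intro w hwm hw
    refine ⟨hFm w hwm, ?_⟩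
    rw [help w]
    exact ENNReal.rpow_lt_top_of_nonneg hpm1.le hw.2.ne
  have hFbound : ∀ j, eLpNorm (fun x => |u j x| ^ (p - 2) * u j x)
      (ENNReal.ofReal (p / (p - 1))) μ ≤ ENNReal.ofReal (C ^ (p - 1)) := by
    intro j
    rw [help, ← ENNReal.ofReal_rpow_of_nonneg hC0 hpm1.le]
    exact ENNReal.rpow_le_rpow (hub j) hpm1.le
  intro φ
  have hsum' : (1 : ℝ≥0∞) / 1 = 1 / ENNReal.ofReal (p / (p - 1)) + 1 / ENNReal.ofReal p := by
    rw [hsum]; norm_num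
  haveI hH : ENNReal.HolderTriple (ENNReal.ofReal (p / (p - 1))) (ENNReal.ofReal p) 1 :=
    ⟨by simpa [one_div] using hsum⟩
  have hgmem : ∀ j, MemLp (fun x => |u j x| ^ (p - 2) * u j x * φ x) 1 μ := by
    intro j
    have h := MemLp.smul (r := 1) (Lp.memLp φ)
      (hFmem (⇑(u j)) (Lp.aestronglyMeasurable (u j)) (Lp.memLp (u j)))
    exact h.ae_eq (Eventually.of_forall fun x => by simp [smul_eq_mul, mul_comm])
  have hGmem : MemLp (fun x => |v x| ^ (p - 2) * v x * φ x) 1 μ := by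
    have h := MemLp.smul (r := 1) (Lp.memLp φ) (hFmem v hvm hvmem)
    exact h.ae_eq (Eventually.of_forall fun x => by simp [smul_eq_mul, mul_comm])
  -- a.e. convergence of the products
  have haeg : ∀ᵐ x ∂μ, Tendsto (fun j => |u j x| ^ (p - 2) * u j x * φ x) atTop
      (𝓝 (|v x| ^ (p - 2) * v x * φ x)) := by
    filter_upwards [hae] with x hx
    have h1 : Tendsto (fun j => |u j x|) atTop (𝓝 |v x|) :=
      (continuous_abs.tendsto _).comp hx
    have h2 : Tendsto (fun j => |u j x| ^ (p - 2)) atTop (𝓝 (|v x| ^ (p - 2))) :=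
      ((Real.continuousAt_rpow_const _ _ (Or.inr hpm2)).tendsto).comp h1
    exact (h2.mul hx).mul_const (φ x)
  -- uniform integrability of the products
  have hui : UnifIntegrable (fun j x => |u j x| ^ (p - 2) * u j x * φ x) 1 μ := by
    have hφui : UnifIntegrable (fun _ : ℕ => (⇑φ : Ω → ℝ)) (ENNReal.ofReal p) μ :=
      unifIntegrable_const hP1 hPtop (Lp.memLp φ)
    intro ε hε
    have hKr0 : (0:ℝ) < C ^ (p - 1) + 1 := by positivity
    obtain ⟨δ, hδ0, hδ⟩ := hφui (div_pos hε hKr0)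
    refine ⟨δ, hδ0, fun i s hs hμs => ?_⟩
    have hindeq : s.indicator (fun x => |u i x| ^ (p - 2) * u i x * φ x)
        = (fun y => |u i y| ^ (p - 2) * u i y) • s.indicator (⇑φ) := by
      funext x
      simp only [Pi.smul_apply, smul_eq_mul]
      by_cases hx : x ∈ s
      · simp [Set.indicator_of_mem hx, smul_eq_mul, mul_assoc]
      · simp [Set.indicator_of_notMem hx]
    have hholder : eLpNorm (s.indicator (fun x => |u i x| ^ (p - 2) * u i x * φ x)) 1 μ
        ≤ eLpNorm (fun x => |u i x| ^ (p - 2) * u i x) (ENNReal.ofReal (p / (p - 1))) μ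
          * eLpNorm (s.indicator (⇑φ)) (ENNReal.ofReal p) μ := by
      rw [hindeq]
      exact eLpNorm_smul_le_mul_eLpNorm ((Lp.aestronglyMeasurable φ).indicator hs)
        (hFm (⇑(u i)) (Lp.aestronglyMeasurable (u i)))
    refine le_trans hholder ?_
    refine le_trans (mul_le_mul' (hFbound i) (hδ i s hs hμs)) ?_
    rw [← ENNReal.ofReal_mul (Real.rpow_nonneg hC0 _)]
    refine ENNReal.ofReal_le_ofReal ?_
    calc C ^ (p - 1) * (ε / (C ^ (p - 1) + 1))
        ≤ (C ^ (p - 1) + 1) * (ε / (C ^ (p - 1) + 1)) := by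
          apply mul_le_mul_of_nonneg_right (by linarith) (div_nonneg hε.le hKr0.le)
      _ = ε := mul_div_cancel₀ ε hKr0.ne'
  -- Vitali convergence theorem
  have hL1 : Tendsto (fun j => eLpNorm ((fun x => |u j x| ^ (p - 2) * u j x * φ x)
      - fun x => |v x| ^ (p - 2) * v x * φ x) 1 μ) atTop (𝓝 0) :=
    tendsto_Lp_finite_of_tendsto_ae le_rfl ENNReal.one_ne_top (fun j => (hgmem j).1) hGmem hui haeg
  exact tendsto_integral_of_L1' _ (memLp_one_iff_integrable.mp hGmem).1
    (Eventually.of_forall fun j => memLp_one_iff_integrable.mp (hgmem j)) hL1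
end

section
/- Let (Ω, 𝒜, μ) be a measure space with μ(Ω) < ∞ and let p ≥ 2 be a real number. Let (u_j) be a sequence in L^p(μ) converging weakly in L^p(μ) to u ∈ L^p(μ) and suppose in addition that u_j → u μ-almost everywhere on Ω. Then ∫_Ω (|u_j|^{p−2} u_j − |u|^{p−2} u)(u_j − u) dμ − ∫_Ω |u_j − u|^p dμ → 0 as j → ∞; equivalently, ∫_Ω (|u_j|^{p−2} u_j − |u|^{p−2} u)(u_j − u) dμ = ‖u_j − u‖_p^p + o(1). -/
open MeasureTheory Filter Topology

section BrezisLiebHelpers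
open Real Set

private lemma bl_abs {p : ℝ} (hp : 2 ≤ p) (t : ℝ) : |(|t| ^ (p-2) * t)| = |t| ^ (p-1) := by
  rcases eq_or_ne t 0 with rfl | ht
  · simp [Real.zero_rpow (by linarith : p - 1 ≠ 0)]
  · rw [abs_mul, abs_of_nonneg (Real.rpow_nonneg (abs_nonneg t) _), ← Real.rpow_add_one
      (abs_ne_zero.2 ht)]
    ring_nf

private lemma bl_mul_self {p : ℝ} (hp : 2 ≤ p) (t : ℝ) : |t| ^ (p-2) * t * t = |t| ^ p := by
  rcases eq_or_ne t 0 with rfl | ht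
  · simp [Real.zero_rpow (by linarith : p ≠ 0)]
  · have h := abs_ne_zero.2 ht
    rw [mul_assoc, ← abs_mul_abs_self, ← mul_assoc, ← Real.rpow_add_one h, ← Real.rpow_add_one h]
    ring_nf

private lemma bl_deriv {p : ℝ} (hp : 2 ≤ p) (t : ℝ) :
    HasDerivAt (fun s : ℝ => |s| ^ (p - 2) * s) ((p - 1) * |t| ^ (p - 2)) t := by
  rcases eq_or_lt_of_le hp with rfl | hp2
  · simp only [sub_self, Real.rpow_zero, one_mul]
    norm_num
    exact hasDerivAt_id t
  rcases lt_trichotomy t 0 with ht | rfl | ht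
  · have h1 : HasDerivAt (fun s : ℝ => -((-s) ^ (p-1))) ((p-1) * (-t) ^ (p-2)) t := by
      have h2 := (Real.hasDerivAt_rpow_const (x := -t) (p := p - 1)
        (Or.inl (by linarith : -t ≠ 0))).comp t ((hasDerivAt_id t).neg)
      have h3 : (p - 1) * (-t) ^ (p - 2) = -((p - 1) * (-t) ^ (p - 1 - 1) * -1) := by
        rw [show p - 1 - 1 = p - 2 by ring]; ring
      rw [h3]; exact h2.neg
    have heq : (fun s : ℝ => |s| ^ (p-2) * s) =ᶠ[𝓝 t] fun s => -((-s) ^ (p-1)) := by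
      filter_upwards [eventually_lt_nhds ht] with s hs
      have h3 : (-s : ℝ) ^ (p-1) = (-s) ^ (p-2) * (-s) := by
        rw [show p - 1 = p - 2 + 1 by ring, Real.rpow_add_one (by linarith : (-s : ℝ) ≠ 0)]
      rw [abs_of_neg hs, h3]; ring
    rw [show (p-1) * |t| ^ (p-2) = (p-1) * (-t) ^ (p-2) by rw [abs_of_neg ht]]
    exact h1.congr_of_eventuallyEq heq
  · rw [hasDerivAt_iff_tendsto_slope]
    have h0 : (p-1) * |(0:ℝ)| ^ (p-2) = 0 := by
      simp [Real.zero_rpow (by linarith : p - 2 ≠ 0)]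
    rw [h0]
    have heq : ∀ s : ℝ, s ≠ 0 → slope (fun s : ℝ => |s| ^ (p - 2) * s) 0 s = |s| ^ (p-2) := by
      intro s hs
      rw [slope_def_field]
      field_simp
      ring
    have hcont : Tendsto (fun s : ℝ => |s| ^ (p-2)) (𝓝[≠] (0:ℝ)) (𝓝 0) := by
      have : ContinuousAt (fun s : ℝ => |s| ^ (p-2)) 0 := by
        exact continuous_abs.continuousAt.rpow_const (Or.inr (by linarith))
      have := this.tendsto
      simp only [abs_zero, Real.zero_rpow (by linarith : p - 2 ≠ 0)] at this
      exact this.mono_left nhdsWithin_le_nhds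
    exact Tendsto.congr' (by filter_upwards [self_mem_nhdsWithin] with s hs
      using (heq s hs).symm) hcont
  · have h1 : HasDerivAt (fun s : ℝ => s ^ (p-1)) ((p-1) * t ^ (p-2)) t := by
      have := Real.hasDerivAt_rpow_const (x := t) (p := p - 1) (Or.inl (ne_of_gt ht))
      convert this using 2; ring
    have heq : (fun s : ℝ => |s| ^ (p-2) * s) =ᶠ[𝓝 t] fun s => s ^ (p-1) := by
      filter_upwards [eventually_gt_nhds ht] with s hs
      rw [abs_of_pos hs, ← Real.rpow_add_one (ne_of_gt hs)]; ring_nf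
    rw [show (p-1) * |t| ^ (p-2) = (p-1) * t ^ (p-2) by rw [abs_of_pos ht]]
    exact h1.congr_of_eventuallyEq heq

private lemma bl_lip {p : ℝ} (hp : 2 ≤ p) (x y : ℝ) :
    |(|x| ^ (p-2) * x) - |y| ^ (p-2) * y| ≤ (p-1) * (max |x| |y|) ^ (p-2) * |x - y| := by
  set C := (p-1) * (max |x| |y|) ^ (p-2) with hC
  have h := Convex.norm_image_sub_le_of_norm_hasDerivWithin_le
    (f := fun s : ℝ => |s| ^ (p-2) * s) (f' := fun s : ℝ => (p-1) * |s| ^ (p-2))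
    (s := Set.uIcc x y) (C := C)
    (fun z _ => (bl_deriv hp z).hasDerivWithinAt)
    (fun z hz => by
      have hz1 : |z| ≤ max |x| |y| := by
        rcases Set.mem_uIcc.mp hz with ⟨h1, h2⟩ | ⟨h1, h2⟩
        · exact abs_le_max_abs_abs h1 h2
        · exact (abs_le_max_abs_abs h1 h2).trans (le_of_eq (max_comm _ _))
      rw [Real.norm_eq_abs, abs_mul, abs_of_nonneg (by linarith : (0:ℝ) ≤ p - 1),
        abs_of_nonneg (Real.rpow_nonneg (abs_nonneg z) _), hC]
      exact mul_le_mul_of_nonneg_left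
        (Real.rpow_le_rpow (abs_nonneg z) hz1 (by linarith)) (by linarith))
    (convex_uIcc x y) Set.left_mem_uIcc Set.right_mem_uIcc
  rw [Real.norm_eq_abs, Real.norm_eq_abs] at h
  calc |(|x| ^ (p-2) * x) - |y| ^ (p-2) * y| = |(|y| ^ (p-2) * y) - |x| ^ (p-2) * x| := abs_sub_comm _ _
    _ ≤ C * |y - x| := h
    _ = C * |x - y| := by rw [abs_sub_comm]

private lemma bl_key_aux {p : ℝ} (hp : 2 ≤ p) {a b : ℝ} (h : |b| ≤ |a|) :
    |(|a+b| ^ (p-2) * (a+b)) - |a| ^ (p-2) * a - |b| ^ (p-2) * b|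
      ≤ ((p-1) * 2 ^ (p-2) + 1) * (|a| ^ (p-2) * |b| + |a| * |b| ^ (p-2)) := by
  have h1 := bl_lip hp (a+b) a
  simp only [add_sub_cancel_left] at h1
  have hmax : max |a+b| |a| ≤ 2 * |a| := by
    apply max_le _ (by linarith [abs_nonneg a])
    calc |a+b| ≤ |a| + |b| := abs_add_le a b
      _ ≤ 2*|a| := by linarith
  have h2 : (max |a+b| |a|) ^ (p-2) ≤ 2^(p-2) * |a|^(p-2) := by
    calc (max |a+b| |a|) ^ (p-2) ≤ (2*|a|) ^ (p-2) :=
          Real.rpow_le_rpow ((abs_nonneg a).trans (le_max_right _ _)) hmax (by linarith)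
      _ = 2^(p-2) * |a|^(p-2) := Real.mul_rpow (by norm_num) (abs_nonneg a)
  have h3 : |(|b| ^ (p-2) * b)| ≤ |a| * |b|^(p-2) := by
    rcases eq_or_ne b 0 with rfl | hb
    · simpa using mul_nonneg (abs_nonneg a) (Real.rpow_nonneg (abs_nonneg 0) _)
    · rw [bl_abs hp, show p - 1 = p - 2 + 1 by ring,
        Real.rpow_add_one (abs_ne_zero.2 hb)]
      calc |b| ^ (p-2) * |b| ≤ |b| ^ (p-2) * |a| :=
            mul_le_mul_of_nonneg_left h (Real.rpow_nonneg (abs_nonneg b) _)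
        _ = |a| * |b| ^ (p-2) := mul_comm _ _
  have h4 : (p-1) * (max |a+b| |a|) ^ (p-2) * |b| ≤ (p-1) * 2^(p-2) * (|a|^(p-2) * |b|) := by
    have := mul_le_mul_of_nonneg_left h2 (by linarith : (0:ℝ) ≤ p - 1)
    have := mul_le_mul_of_nonneg_right this (abs_nonneg b)
    linarith [this]
  have habs : |(|a+b| ^ (p-2) * (a+b)) - |a| ^ (p-2) * a - |b| ^ (p-2) * b|
      ≤ |(|a+b| ^ (p-2) * (a+b)) - |a| ^ (p-2) * a| + |(|b| ^ (p-2) * b)| := by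
    calc _ = |((|a+b| ^ (p-2) * (a+b)) - |a| ^ (p-2) * a) + -(|b| ^ (p-2) * b)| := by ring_nf
      _ ≤ _ := by rw [← abs_neg (|b| ^ (p-2) * b)] ; exact abs_add_le _ _
  have hT1 : (0:ℝ) ≤ |a|^(p-2) * |b| :=
    mul_nonneg (Real.rpow_nonneg (abs_nonneg a) _) (abs_nonneg b)
  have hT2 : (0:ℝ) ≤ |a| * |b|^(p-2) :=
    mul_nonneg (abs_nonneg a) (Real.rpow_nonneg (abs_nonneg b) _)
  have hc : (0:ℝ) ≤ (p-1) * 2^(p-2) :=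
    mul_nonneg (by linarith) (Real.rpow_nonneg (by norm_num) _)
  nlinarith [h1, h3, h4, habs, hT1, hT2, hc]

private lemma bl_key {p : ℝ} (hp : 2 ≤ p) (a b : ℝ) :
    |(|a+b| ^ (p-2) * (a+b)) - |a| ^ (p-2) * a - |b| ^ (p-2) * b|
      ≤ ((p-1) * 2 ^ (p-2) + 1) * (|a| ^ (p-2) * |b| + |a| * |b| ^ (p-2)) := by
  rcases le_total |b| |a| with h | h
  · exact bl_key_aux hp h
  · have h5 := bl_key_aux hp h
    rw [add_comm b a] at h5
    have e1 : |(|a+b| ^ (p-2) * (a+b)) - |b| ^ (p-2) * b - |a| ^ (p-2) * a|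
        = |(|a+b| ^ (p-2) * (a+b)) - |a| ^ (p-2) * a - |b| ^ (p-2) * b| := by
      congr 1; ring
    rw [e1] at h5
    calc _ ≤ ((p-1) * 2 ^ (p-2) + 1) * (|b| ^ (p-2) * |a| + |b| * |a| ^ (p-2)) := h5
      _ = _ := by ring

variable {Ω : Type*} [MeasurableSpace Ω] {μ : Measure Ω}

private lemma bl_conj {p : ℝ} (hp : 2 ≤ p) :
    (1:ENNReal) / 1 = 1 / ENNReal.ofReal (p/(p-1)) + 1 / ENNReal.ofReal p := by
  have h1 : (0:ℝ) < p - 1 := by linarith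
  have h2 : (0:ℝ) < p := by linarith
  have hq : (0:ℝ) < p/(p-1) := by positivity
  rw [ENNReal.div_eq_inv_mul, ENNReal.div_eq_inv_mul, ENNReal.div_eq_inv_mul, inv_one, mul_one,
    mul_one, mul_one, ← ENNReal.ofReal_inv_of_pos hq, ← ENNReal.ofReal_inv_of_pos h2,
    ← ENNReal.ofReal_add (by positivity) (by positivity)]
  rw [show (p/(p-1))⁻¹ + p⁻¹ = 1 by field_simp; ring]
  exact (ENNReal.ofReal_one).symm

private lemma bl_ht {a b : ENNReal} (h : (1:ENNReal) / 1 = 1 / a + 1 / b) :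
    ENNReal.HolderTriple a b 1 := ⟨by simpa [one_div] using h.symm⟩

private lemma bl_integrable_mul {p : ℝ} (hp : 2 ≤ p) {f g : Ω → ℝ}
    (hf : MemLp f (ENNReal.ofReal p) μ) (hg : MemLp g (ENNReal.ofReal (p/(p-1))) μ) :
    Integrable (fun x => g x * f x) μ := by
  haveI := bl_ht (bl_conj hp)
  have h := hf.smul hg (r := 1)
  rw [memLp_one_iff_integrable] at h
  exact h

private lemma bl_holder_bound {p : ℝ} (hp : 2 ≤ p) {f g : Ω → ℝ}
    (hf : MemLp f (ENNReal.ofReal p) μ) (hg : MemLp g (ENNReal.ofReal (p/(p-1))) μ) :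
    |∫ x, g x * f x ∂μ| ≤
      (eLpNorm g (ENNReal.ofReal (p/(p-1))) μ).toReal * (eLpNorm f (ENNReal.ofReal p) μ).toReal := by
  have hint := bl_integrable_mul hp hf hg
  have h1 : |∫ x, g x * f x ∂μ| ≤ ∫ x, ‖g x * f x‖ ∂μ := by
    rw [← Real.norm_eq_abs]; exact norm_integral_le_integral_norm _
  have h2 : ∫ x, ‖g x * f x‖ ∂μ = (eLpNorm (fun x => g x * f x) 1 μ).toReal := by
    rw [eLpNorm_one_eq_lintegral_enorm, integral_norm_eq_lintegral_enorm hint.1]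
  have h3 : eLpNorm (fun x => g x * f x) 1 μ ≤
      eLpNorm g (ENNReal.ofReal (p/(p-1))) μ * eLpNorm f (ENNReal.ofReal p) μ :=
    haveI := bl_ht (bl_conj hp)
    by simpa only [ENNReal.coe_one, one_mul] using
      eLpNorm_le_eLpNorm_mul_eLpNorm'_of_norm hg.1 hf.1 (· * ·) 1
        (Eventually.of_forall fun x => by simp only [NNReal.coe_one, one_mul, norm_mul, le_refl])
  have h4 : (eLpNorm (fun x => g x * f x) 1 μ).toReal ≤
      (eLpNorm g (ENNReal.ofReal (p/(p-1))) μ).toReal * (eLpNorm f (ENNReal.ofReal p) μ).toReal := by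
    rw [← ENNReal.toReal_mul]
    exact ENNReal.toReal_mono (ENNReal.mul_ne_top hg.2.ne hf.2.ne) h3
  linarith

private lemma bl_dual_eLpNorm {p : ℝ} (hp : 2 ≤ p) {g : Ω → ℝ}
    (hg : AEStronglyMeasurable g μ) :
    eLpNorm (fun x => |g x| ^ (p-2) * g x) (ENNReal.ofReal (p/(p-1))) μ
      = eLpNorm g (ENNReal.ofReal p) μ ^ (p-1) := by
  have h1 : eLpNorm (fun x => |g x| ^ (p-2) * g x) (ENNReal.ofReal (p/(p-1))) μ
      = eLpNorm (fun x => ‖g x‖ ^ (p-1)) (ENNReal.ofReal (p/(p-1))) μ := by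
    apply eLpNorm_congr_norm_ae
    filter_upwards with x
    simp only [Real.norm_eq_abs, bl_abs hp,
      abs_of_nonneg (Real.rpow_nonneg (abs_nonneg (g x)) (p-1))]
  rw [h1, eLpNorm_norm_rpow g (by linarith : (0:ℝ) < p - 1),
    ← ENNReal.ofReal_mul (div_nonneg (by linarith) (by linarith)),
    show p/(p-1) * (p-1) = p from div_mul_cancel₀ p (by linarith : p - 1 ≠ 0)]

private lemma bl_dual_mem {p : ℝ} (hp : 2 ≤ p) {g : Ω → ℝ}
    (hg : MemLp g (ENNReal.ofReal p) μ) :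
    MemLp (fun x => |g x| ^ (p-2) * g x) (ENNReal.ofReal (p/(p-1))) μ := by
  have hc : Continuous (fun t : ℝ => |t| ^ (p-2) * t) :=
    continuous_iff_continuousAt.2 fun t => ((bl_deriv hp t).continuousAt)
  refine ⟨hc.comp_aestronglyMeasurable hg.1, ?_⟩
  rw [bl_dual_eLpNorm hp hg.1]
  exact ENNReal.rpow_lt_top_of_nonneg (by linarith) hg.2.ne

private lemma bl_holder_bound' {p : ℝ} (hp : 2 ≤ p) {f g : Ω → ℝ}
    (hf : MemLp f (ENNReal.ofReal p) μ) (hg : MemLp g (ENNReal.ofReal (p/(p-1))) μ) :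
    |∫ x, f x * g x ∂μ| ≤
      (eLpNorm f (ENNReal.ofReal p) μ).toReal *
        (eLpNorm g (ENNReal.ofReal (p/(p-1))) μ).toReal := by
  have h := bl_holder_bound hp hf hg
  rw [show (∫ x, g x * f x ∂μ) = ∫ x, f x * g x ∂μ from by
    congr 1; funext x; ring] at h
  linarith

private lemma bl_integrable_mul' {p : ℝ} (hp : 2 ≤ p) {f g : Ω → ℝ}
    (hf : MemLp f (ENNReal.ofReal p) μ) (hg : MemLp g (ENNReal.ofReal (p/(p-1))) μ) :
    Integrable (fun x => f x * g x) μ := by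
  have h := bl_integrable_mul hp hf hg
  simpa [mul_comm] using h

private lemma bl_bounded {p : ℝ} (hp : 2 ≤ p) [Fact (1 ≤ ENNReal.ofReal p)]
    (u : ℕ → Lp ℝ (ENNReal.ofReal p) μ)
    (hweak : ∀ φ : Ω → ℝ, MemLp φ (ENNReal.ofReal (p / (p - 1))) μ →
      ∃ L, Tendsto (fun j => ∫ x, u j x * φ x ∂μ) atTop (𝓝 L)) :
    ∃ M, ∀ j, ‖u j‖ ≤ M := by
  have hp1 : (0:ℝ) < p - 1 := by linarith
  have hp0 : (0:ℝ) < p := by linarith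
  have hPne0 : ENNReal.ofReal p ≠ 0 := by
    simpa [ENNReal.ofReal_eq_zero] using hp0
  haveI : Fact (1 ≤ ENNReal.ofReal (p/(p-1))) :=
    ⟨ENNReal.one_le_ofReal.2 (by rw [le_div_iff₀ hp1]; linarith)⟩
  have hInt : ∀ j (φ : Lp ℝ (ENNReal.ofReal (p/(p-1))) μ),
      Integrable (fun x => u j x * φ x) μ :=
    fun j φ => bl_integrable_mul' hp (Lp.memLp (u j)) (Lp.memLp φ)
  let T : ℕ → (Lp ℝ (ENNReal.ofReal (p/(p-1))) μ →L[ℝ] ℝ) := fun j =>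
    LinearMap.mkContinuous
      { toFun := fun φ => ∫ x, u j x * φ x ∂μ
        map_add' := fun φ ψ => by
          show (∫ x, u j x * (φ + ψ) x ∂μ) = (∫ x, u j x * φ x ∂μ) + (∫ x, u j x * ψ x ∂μ)
          have h1 : ∫ x, u j x * (φ + ψ) x ∂μ = ∫ x, (u j x * φ x + u j x * ψ x) ∂μ := by
            apply integral_congr_ae
            filter_upwards [Lp.coeFn_add φ ψ] with x hx
            rw [hx]; simp [mul_add]
          rw [h1, integral_add (hInt j φ) (hInt j ψ)]
        map_smul' := fun c φ => by
          show (∫ x, u j x * (c • φ) x ∂μ) = (RingHom.id ℝ) c • (∫ x, u j x * φ x ∂μ)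
          have h1 : ∫ x, u j x * (c • φ) x ∂μ = ∫ x, c * (u j x * φ x) ∂μ := by
            apply integral_congr_ae
            filter_upwards [Lp.coeFn_smul c φ] with x hx
            rw [hx]; simp [smul_eq_mul]; ring
          rw [h1, integral_const_mul]
          simp }
      ‖u j‖ (fun φ => by
        have hb := bl_holder_bound' hp (Lp.memLp (u j)) (Lp.memLp φ)
        simp only [Real.norm_eq_abs, LinearMap.coe_mk, AddHom.coe_mk]
        rw [Lp.norm_def, Lp.norm_def]
        exact hb)
  have hptb : ∀ φ, ∃ C, ∀ j, ‖T j φ‖ ≤ C := by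
    intro φ
    obtain ⟨L, hL⟩ := hweak φ (Lp.memLp φ)
    obtain ⟨C, hC⟩ := hL.norm.bddAbove_range
    exact ⟨C, fun j => hC ⟨j, rfl⟩⟩
  obtain ⟨C, hC⟩ := banach_steinhaus hptb
  have hC0 : 0 ≤ C := le_trans (norm_nonneg _) (hC 0)
  refine ⟨max C 0, fun j => ?_⟩
  set N := ‖u j‖ with hN
  have hN0 : 0 ≤ N := norm_nonneg _
  rcases eq_or_lt_of_le hN0 with h0 | hpos
  · rw [← h0]; exact le_max_right _ _
  set φj := ((bl_dual_mem hp (Lp.memLp (u j))).toLp _) with hφj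
  have h1 : T j φj = ∫ x, |u j x| ^ p ∂μ := by
    show ∫ x, u j x * φj x ∂μ = _
    have := (bl_dual_mem hp (Lp.memLp (u j))).coeFn_toLp
    calc ∫ x, u j x * φj x ∂μ
        = ∫ x, u j x * (|u j x| ^ (p-2) * u j x) ∂μ := by
          apply integral_congr_ae
          filter_upwards [this] with x hx
          rw [hx]
      _ = ∫ x, |u j x| ^ p ∂μ := by
          congr 1; funext x
          rw [← bl_mul_self hp (u j x)]; ring
  have h2 : ∫ x, |u j x| ^ p ∂μ = N ^ p := by
    have he := (Lp.memLp (u j)).eLpNorm_eq_integral_rpow_norm hPne0 ENNReal.ofReal_ne_top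
    have hI0 : 0 ≤ ∫ x, ‖u j x‖ ^ (ENNReal.ofReal p).toReal ∂μ :=
      integral_nonneg fun x => Real.rpow_nonneg (norm_nonneg _) _
    have hNe : N = (∫ x, ‖u j x‖ ^ (ENNReal.ofReal p).toReal ∂μ) ^ ((ENNReal.ofReal p).toReal)⁻¹ := by
      rw [hN, Lp.norm_def, he, ENNReal.toReal_ofReal (Real.rpow_nonneg hI0 _)]
    have : (∫ x, |u j x| ^ p ∂μ) = ∫ x, ‖u j x‖ ^ (ENNReal.ofReal p).toReal ∂μ := by
      rw [ENNReal.toReal_ofReal hp0.le]; rfl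
    rw [this, hNe, ← Real.rpow_mul hI0, ENNReal.toReal_ofReal hp0.le,
      inv_mul_cancel₀ (ne_of_gt hp0), Real.rpow_one]
  have h3 : ‖φj‖ = N ^ (p-1) := by
    rw [hφj, Lp.norm_toLp, bl_dual_eLpNorm hp (Lp.memLp (u j)).1, hN, Lp.norm_def,
      ← ENNReal.toReal_rpow]
  have h4 : N ^ p ≤ C * N ^ (p - 1) := by
    rw [← h2, ← h1]
    calc T j φj ≤ |T j φj| := le_abs_self _
      _ = ‖T j φj‖ := rfl
      _ ≤ ‖T j‖ * ‖φj‖ := (T j).le_opNorm φj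
      _ ≤ C * ‖φj‖ := mul_le_mul_of_nonneg_right (hC j) (norm_nonneg _)
      _ = C * N ^ (p-1) := by rw [h3]
  have h5 : N ^ p = N ^ (p-1) * N := by
    rw [show p = p - 1 + 1 by ring, Real.rpow_add_one (ne_of_gt hpos)]
    ring_nf
  have hpow : 0 < N ^ (p-1) := Real.rpow_pos_of_pos hpos _
  have : N ≤ C := by
    rw [h5] at h4
    exact le_of_mul_le_mul_left (by linarith [h4] : N ^ (p-1) * N ≤ N ^ (p-1) * C) hpow
  exact this.trans (le_max_left _ _)

private lemma bl_conj' {a b : ℝ} (ha : 0 < a) (hb : 0 < b) (hab : 1/a + 1/b = 1) :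
    (1:ENNReal) / 1 = 1 / ENNReal.ofReal a + 1 / ENNReal.ofReal b := by
  calc (1:ENNReal)/1 = 1 := by norm_num
    _ = ENNReal.ofReal (1/a + 1/b) := by rw [hab, ENNReal.ofReal_one]
    _ = ENNReal.ofReal (1/a) + ENNReal.ofReal (1/b) :=
        ENNReal.ofReal_add (by positivity) (by positivity)
    _ = 1 / ENNReal.ofReal a + 1 / ENNReal.ofReal b := by
        rw [one_div, one_div, one_div, one_div, ENNReal.ofReal_inv_of_pos ha,
          ENNReal.ofReal_inv_of_pos hb]

private lemma bl_holder_eLp {a b : ℝ} (ha : 0 < a) (hb : 0 < b) (hab : 1/a + 1/b = 1)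
    {f g : Ω → ℝ} (hf : AEStronglyMeasurable f μ) (hg : AEStronglyMeasurable g μ) :
    eLpNorm (fun x => f x * g x) 1 μ
      ≤ eLpNorm f (ENNReal.ofReal a) μ * eLpNorm g (ENNReal.ofReal b) μ :=
  haveI := bl_ht (bl_conj' ha hb hab)
  by simpa only [ENNReal.coe_one, one_mul] using
    eLpNorm_le_eLpNorm_mul_eLpNorm'_of_norm hf hg (· * ·) 1
      (Eventually.of_forall fun x => by simp only [NNReal.coe_one, one_mul, norm_mul, le_refl])

private lemma bl_eLp_rpow {c : ℝ} (hc : 0 < c) {t : ℝ} (ht : 0 < t) (g : Ω → ℝ) :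
    eLpNorm (fun x => |g x| ^ c) (ENNReal.ofReal (t/c)) μ
      = eLpNorm g (ENNReal.ofReal t) μ ^ c := by
  have h1 : (fun x => |g x| ^ c) = fun x => ‖g x‖ ^ c := rfl
  rw [h1, eLpNorm_norm_rpow g hc, ← ENNReal.ofReal_mul (div_nonneg ht.le hc.le),
    div_mul_cancel₀ t (ne_of_gt hc)]

private lemma bl_ui {p : ℝ} (hp2 : 2 < p) [IsFiniteMeasure μ] {v : Ω → ℝ} {w : ℕ → Ω → ℝ}
    (hv : MemLp v (ENNReal.ofReal p) μ) (hw : ∀ j, AEStronglyMeasurable (w j) μ)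
    {k : ℝ} (hk : 0 < k) (hwk : ∀ j, eLpNorm (w j) (ENNReal.ofReal p) μ ≤ ENNReal.ofReal k)
    {H : ℕ → Ω → ℝ}
    (hHb : ∀ j x, ‖H j x‖ ≤ ((p-1) * 2^(p-2) + 1) *
      (|v x| ^ (p-2) * |w j x| ^ (2:ℝ) + |v x| * |w j x| ^ (p-1))) :
    UnifIntegrable H 1 μ := by
  have hp0 : (0:ℝ) < p := by linarith
  intro ε hε
  set C0 : ℝ := (p-1) * 2^(p-2) + 1 with hC0
  have h2pow : (0:ℝ) < 2^(p-2) := Real.rpow_pos_of_pos (by norm_num) _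
  have hC0pos : 0 < C0 := by nlinarith
  have hcont1 : Continuous (fun t : ℝ => |t| ^ (p-2)) :=
    continuous_abs.rpow_const (fun t => Or.inr (by linarith))
  have hcont2 : Continuous (fun t : ℝ => |t| ^ (2:ℝ)) :=
    continuous_abs.rpow_const (fun t => Or.inr (by norm_num))
  have hcontq : Continuous (fun t : ℝ => |t| ^ (p-1)) :=
    continuous_abs.rpow_const (fun t => Or.inr (by linarith))
  have hv1 : MemLp (fun x => |v x| ^ (p-2)) (ENNReal.ofReal (p/(p-2))) μ := by
    refine ⟨hcont1.comp_aestronglyMeasurable hv.1, ?_⟩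
    rw [bl_eLp_rpow (by linarith : (0:ℝ) < p - 2) hp0 v]
    exact ENNReal.rpow_lt_top_of_nonneg (by linarith) hv.2.ne
  set ε' : ℝ := ε / (C0 * (k^(2:ℝ) + k^(p-1)) + 1) with hε'
  have hkpow2 : (0:ℝ) < k^(2:ℝ) := Real.rpow_pos_of_pos hk _
  have hkpowq : (0:ℝ) < k^(p-1) := Real.rpow_pos_of_pos hk _
  have hden : (0:ℝ) < C0 * (k^(2:ℝ) + k^(p-1)) + 1 := by nlinarith
  have hε'pos : 0 < ε' := div_pos hε hden
  obtain ⟨δ1, hδ1pos, hδ1⟩ := hv1.eLpNorm_indicator_le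
    (ENNReal.one_le_ofReal.2 (by rw [le_div_iff₀ (by linarith)]; linarith))
    ENNReal.ofReal_ne_top hε'pos
  obtain ⟨δ2, hδ2pos, hδ2⟩ := hv.eLpNorm_indicator_le
    (ENNReal.one_le_ofReal.2 (by linarith)) ENNReal.ofReal_ne_top hε'pos
  refine ⟨min δ1 δ2, lt_min hδ1pos hδ2pos, fun j s hs hμs => ?_⟩
  have hμs1 : μ s ≤ ENNReal.ofReal δ1 :=
    hμs.trans (ENNReal.ofReal_le_ofReal (min_le_left _ _))
  have hμs2 : μ s ≤ ENNReal.ofReal δ2 :=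
    hμs.trans (ENNReal.ofReal_le_ofReal (min_le_right _ _))
  set D1 : Ω → ℝ := fun x => |v x| ^ (p-2) * |w j x| ^ (2:ℝ) with hD1
  set D2 : Ω → ℝ := fun x => |v x| * |w j x| ^ (p-1) with hD2
  have hD1m : AEStronglyMeasurable D1 μ :=
    (hcont1.comp_aestronglyMeasurable hv.1).mul (hcont2.comp_aestronglyMeasurable (hw j))
  have hD2m : AEStronglyMeasurable D2 μ :=
    (continuous_abs.comp_aestronglyMeasurable hv.1).mul (hcontq.comp_aestronglyMeasurable (hw j))
  have step0 : eLpNorm (s.indicator (H j)) 1 μ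
      ≤ eLpNorm (fun x => C0 • (s.indicator D1 x + s.indicator D2 x)) 1 μ := by
    apply eLpNorm_mono
    intro x
    by_cases hx : x ∈ s
    · simp only [Set.indicator_of_mem hx, smul_eq_mul]
      have hnn : 0 ≤ C0 * (D1 x + D2 x) := by
        have : 0 ≤ D1 x := mul_nonneg (Real.rpow_nonneg (abs_nonneg _) _)
          (Real.rpow_nonneg (abs_nonneg _) _)
        have : 0 ≤ D2 x := mul_nonneg (abs_nonneg _) (Real.rpow_nonneg (abs_nonneg _) _)
        nlinarith [mul_nonneg (Real.rpow_nonneg (abs_nonneg (v x)) (p-2))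
          (Real.rpow_nonneg (abs_nonneg (w j x)) (2:ℝ))]
      rw [Real.norm_eq_abs (C0 * _), abs_of_nonneg hnn]
      exact hHb j x
    · simp [Set.indicator_of_notMem hx]
  have step1 : eLpNorm (fun x => C0 • (s.indicator D1 x + s.indicator D2 x)) 1 μ
      = (‖C0‖₊ : ENNReal) * eLpNorm (fun x => s.indicator D1 x + s.indicator D2 x) 1 μ := by
    exact eLpNorm_const_smul C0 _ 1 μ
  have step2 : eLpNorm (fun x => s.indicator D1 x + s.indicator D2 x) 1 μ
      ≤ eLpNorm (s.indicator D1) 1 μ + eLpNorm (s.indicator D2) 1 μ :=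
    eLpNorm_add_le (hD1m.indicator hs) (hD2m.indicator hs) le_rfl
  have hind1 : s.indicator D1 = fun x => s.indicator (fun y => |v y| ^ (p-2)) x * |w j x| ^ (2:ℝ) := by
    funext x
    by_cases hx : x ∈ s <;> simp [Set.indicator_of_mem, Set.indicator_of_notMem, hx, hD1]
  have hind2 : s.indicator D2 = fun x => s.indicator (fun y => |v y|) x * |w j x| ^ (p-1) := by
    funext x
    by_cases hx : x ∈ s <;> simp [Set.indicator_of_mem, Set.indicator_of_notMem, hx, hD2]
  have hw2 : eLpNorm (fun x => |w j x| ^ (2:ℝ)) (ENNReal.ofReal (p/2)) μ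
      ≤ ENNReal.ofReal (k ^ (2:ℝ)) := by
    rw [bl_eLp_rpow (by norm_num : (0:ℝ) < 2) hp0 (w j),
      ← ENNReal.ofReal_rpow_of_pos hk]
    exact ENNReal.rpow_le_rpow (hwk j) (by norm_num)
  have hwq : eLpNorm (fun x => |w j x| ^ (p-1)) (ENNReal.ofReal (p/(p-1))) μ
      ≤ ENNReal.ofReal (k ^ (p-1)) := by
    rw [bl_eLp_rpow (by linarith : (0:ℝ) < p-1) hp0 (w j),
      ← ENNReal.ofReal_rpow_of_pos hk]
    exact ENNReal.rpow_le_rpow (hwk j) (by linarith)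
  have step3 : eLpNorm (s.indicator D1) 1 μ ≤ ENNReal.ofReal ε' * ENNReal.ofReal (k ^ (2:ℝ)) := by
    rw [hind1]
    calc eLpNorm (fun x => s.indicator (fun y => |v y| ^ (p-2)) x * |w j x| ^ (2:ℝ)) 1 μ
        ≤ eLpNorm (s.indicator (fun y => |v y| ^ (p-2))) (ENNReal.ofReal (p/(p-2))) μ
            * eLpNorm (fun x => |w j x| ^ (2:ℝ)) (ENNReal.ofReal (p/2)) μ := by
          apply bl_holder_eLp (div_pos hp0 (by linarith)) (by positivity)
            (by field_simp; ring) (hv1.1.indicator hs)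
            (hcont2.comp_aestronglyMeasurable (hw j))
      _ ≤ ENNReal.ofReal ε' * ENNReal.ofReal (k ^ (2:ℝ)) :=
          mul_le_mul' (hδ1 s hs hμs1) hw2
  have step4 : eLpNorm (s.indicator D2) 1 μ ≤ ENNReal.ofReal ε' * ENNReal.ofReal (k ^ (p-1)) := by
    rw [hind2]
    calc eLpNorm (fun x => s.indicator (fun y => |v y|) x * |w j x| ^ (p-1)) 1 μ
        ≤ eLpNorm (s.indicator (fun y => |v y|)) (ENNReal.ofReal p) μ
            * eLpNorm (fun x => |w j x| ^ (p-1)) (ENNReal.ofReal (p/(p-1))) μ := by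
          apply bl_holder_eLp hp0 (div_pos hp0 (by linarith))
            (by field_simp; ring) ((continuous_abs.comp_aestronglyMeasurable hv.1).indicator hs)
            (hcontq.comp_aestronglyMeasurable (hw j))
      _ ≤ ENNReal.ofReal ε' * ENNReal.ofReal (k ^ (p-1)) := by
          apply mul_le_mul' _ hwq
          have : s.indicator (fun y => |v y|) = fun x => ‖s.indicator v x‖ := by
            funext x
            by_cases hx : x ∈ s <;>
              simp [Set.indicator_of_mem, Set.indicator_of_notMem, hx]
          rw [this, eLpNorm_norm]
          exact hδ2 s hs hμs2
  calc eLpNorm (s.indicator (H j)) 1 μ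
      ≤ (‖C0‖₊ : ENNReal) * (eLpNorm (s.indicator D1) 1 μ + eLpNorm (s.indicator D2) 1 μ) := by
        refine step0.trans ?_
        rw [step1]
        exact mul_le_mul_right step2 _
    _ ≤ ENNReal.ofReal C0 * (ENNReal.ofReal ε' * ENNReal.ofReal (k ^ (2:ℝ))
          + ENNReal.ofReal ε' * ENNReal.ofReal (k ^ (p-1))) := by
        rw [← enorm_eq_nnnorm, Real.enorm_eq_ofReal hC0pos.le]
        exact mul_le_mul_right (add_le_add step3 step4) _
    _ = ENNReal.ofReal (C0 * (ε' * k ^ (2:ℝ) + ε' * k ^ (p-1))) := by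
        rw [← ENNReal.ofReal_mul hε'pos.le, ← ENNReal.ofReal_mul hε'pos.le,
          ← ENNReal.ofReal_add (by positivity) (by positivity),
          ← ENNReal.ofReal_mul hC0pos.le]
    _ ≤ ENNReal.ofReal ε := by
        apply ENNReal.ofReal_le_ofReal
        have h1 : C0 * (ε' * k ^ (2:ℝ) + ε' * k ^ (p-1)) = ε' * (C0 * (k^(2:ℝ) + k^(p-1))) := by
          ring
        rw [h1, hε', div_mul_eq_mul_div, div_le_iff₀ hden]
        nlinarith


end BrezisLiebHelpers

/-- Brezis–Lieb type identity: if `u_j ⇀ u` weakly in `L^p` and `u_j → u` a.e., then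
`∫ (|u_j|^{p-2}u_j − |u|^{p-2}u)(u_j − u) dμ = ‖u_j − u‖_p^p + o(1)`. -/
theorem brezis_lieb_weak
    {Ω : Type*} [MeasurableSpace Ω] (μ : Measure Ω) [IsFiniteMeasure μ]
    (p : ℝ) (hp : 2 ≤ p) [Fact (1 ≤ ENNReal.ofReal p)]
    (u : ℕ → Lp ℝ (ENNReal.ofReal p) μ) (v : Lp ℝ (ENNReal.ofReal p) μ)
    (hweak : ∀ φ : Ω → ℝ, MemLp φ (ENNReal.ofReal (p / (p - 1))) μ →
      Tendsto (fun j => ∫ x, u j x * φ x ∂μ) atTop (𝓝 (∫ x, v x * φ x ∂μ)))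
    (hae : ∀ᵐ x ∂μ, Tendsto (fun j => u j x) atTop (𝓝 (v x))) :
    Tendsto (fun j =>
        (∫ x, (|u j x| ^ (p - 2) * u j x - |v x| ^ (p - 2) * v x) * (u j x - v x) ∂μ)
          - ∫ x, |u j x - v x| ^ p ∂μ) atTop (𝓝 0) := by
  have hp1 : (0:ℝ) < p - 1 := by linarith
  have hp0 : (0:ℝ) < p := by linarith
  have hPne0 : ENNReal.ofReal p ≠ 0 := by simpa [ENNReal.ofReal_eq_zero] using hp0
  have hPtop : ENNReal.ofReal p ≠ ⊤ := ENNReal.ofReal_ne_top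
  set w : ℕ → Ω → ℝ := fun j x => u j x - v x with hwdef
  have mem_u : ∀ j, MemLp (⇑(u j)) (ENNReal.ofReal p) μ := fun j => Lp.memLp _
  have mem_v : MemLp (⇑v) (ENNReal.ofReal p) μ := Lp.memLp _
  have mem_w : ∀ j, MemLp (w j) (ENNReal.ofReal p) μ := fun j => (mem_u j).sub mem_v
  have mem_fu : ∀ j, MemLp (fun x => |u j x| ^ (p-2) * u j x) (ENNReal.ofReal (p/(p-1))) μ :=
    fun j => bl_dual_mem hp (mem_u j)
  have mem_fv : MemLp (fun x => |v x| ^ (p-2) * v x) (ENNReal.ofReal (p/(p-1))) μ :=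
    bl_dual_mem hp mem_v
  have mem_fw : ∀ j, MemLp (fun x => |w j x| ^ (p-2) * w j x) (ENNReal.ofReal (p/(p-1))) μ :=
    fun j => bl_dual_mem hp (mem_w j)
  have hA : ∀ j, Integrable
      (fun x => (|u j x| ^ (p-2) * u j x - |v x| ^ (p-2) * v x) * (w j x)) μ :=
    fun j => bl_integrable_mul hp (mem_w j) ((mem_fu j).sub mem_fv)
  have hB : ∀ j, Integrable (fun x => |w j x| ^ p) μ := fun j => by
    have h := (mem_w j).integrable_norm_rpow hPne0 hPtop
    rw [ENNReal.toReal_ofReal hp0.le] at h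
    exact h
  set H : ℕ → Ω → ℝ := fun j x =>
    (|u j x| ^ (p-2) * u j x - |v x| ^ (p-2) * v x - |w j x| ^ (p-2) * w j x) * w j x with hHdef
  have key : ∀ j,
      (∫ x, (|u j x| ^ (p - 2) * u j x - |v x| ^ (p - 2) * v x) * (u j x - v x) ∂μ)
        - (∫ x, |u j x - v x| ^ p ∂μ) = ∫ x, H j x ∂μ := by
    intro j
    rw [← integral_sub (hA j) (hB j)]
    congr 1
    funext x
    have h1 : |w j x| ^ (p-2) * w j x * w j x = |w j x| ^ p := bl_mul_self hp (w j x)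
    show (|u j x| ^ (p - 2) * u j x - |v x| ^ (p - 2) * v x) * w j x - |w j x| ^ p = H j x
    rw [hHdef]
    linear_combination h1
  have hgoal : (fun j =>
      (∫ x, (|u j x| ^ (p - 2) * u j x - |v x| ^ (p - 2) * v x) * (u j x - v x) ∂μ)
        - ∫ x, |u j x - v x| ^ p ∂μ) = fun j => ∫ x, H j x ∂μ := funext key
  rw [hgoal]
  have hmeasH : ∀ j, AEStronglyMeasurable (H j) μ := fun j =>
    (((mem_fu j).1.sub mem_fv.1).sub (mem_fw j).1).mul (mem_w j).1
  rcases eq_or_lt_of_le hp with hpe | hp2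
  · -- p = 2 : H ≡ 0
    have hH0 : ∀ j, H j = fun _ => 0 := by
      intro j
      funext x
      rw [hHdef]
      simp only [← hpe, sub_self, Real.rpow_zero, one_mul]
      ring
    simp only [hH0]
    simpa using tendsto_const_nhds (α := ℝ) (f := atTop (α := ℕ))
  · -- p > 2
    obtain ⟨M, hM⟩ := bl_bounded hp u (fun φ hφ => ⟨_, hweak φ hφ⟩)
    have hM0 : 0 ≤ M := (norm_nonneg (u 0)).trans (hM 0)
    set k : ℝ := M + ‖v‖ + 1 with hk
    have hkpos : 0 < k := by positivity
    have hwk : ∀ j, eLpNorm (w j) (ENNReal.ofReal p) μ ≤ ENNReal.ofReal k := by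
      intro j
      have h1 : eLpNorm (w j) (ENNReal.ofReal p) μ
          ≤ eLpNorm (⇑(u j)) (ENNReal.ofReal p) μ + eLpNorm (⇑v) (ENNReal.ofReal p) μ := by
        have := eLpNorm_sub_le (Lp.aestronglyMeasurable (u j)) (Lp.aestronglyMeasurable v)
          (Fact.out : (1:ENNReal) ≤ ENNReal.ofReal p)
        exact this
      have h2 : eLpNorm (⇑(u j)) (ENNReal.ofReal p) μ = ENNReal.ofReal ‖u j‖ := by
        rw [Lp.norm_def, ENNReal.ofReal_toReal (Lp.eLpNorm_ne_top _)]
      have h3 : eLpNorm (⇑v) (ENNReal.ofReal p) μ = ENNReal.ofReal ‖v‖ := by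
        rw [Lp.norm_def, ENNReal.ofReal_toReal (Lp.eLpNorm_ne_top _)]
      rw [h2, h3, ← ENNReal.ofReal_add (norm_nonneg _) (norm_nonneg _)] at h1
      exact h1.trans (ENNReal.ofReal_le_ofReal (by linarith [hM j]))
    have hHb : ∀ j x, ‖H j x‖ ≤ ((p-1) * 2^(p-2) + 1) *
        (|v x| ^ (p-2) * |w j x| ^ (2:ℝ) + |v x| * |w j x| ^ (p-1)) := by
      intro j x
      have hkey := bl_key hp (v x) (w j x)
      rw [show v x + w j x = u j x by rw [hwdef]; ring] at hkey
      simp only [hHdef, Real.norm_eq_abs, abs_mul]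
      have e2 : |w j x| ^ (2:ℝ) = |w j x| * |w j x| := by
        rw [show (2:ℝ) = ((2:ℕ):ℝ) by norm_num, Real.rpow_natCast]
        ring
      have e3 : |w j x| ^ (p-2) * |w j x| = |w j x| ^ (p-1) := by
        rcases eq_or_ne (w j x) 0 with h0 | h0
        · rw [h0]
          simp [Real.zero_rpow (show p-1 ≠ 0 by linarith)]
        · rw [show p-1 = p-2+1 by ring, Real.rpow_add_one (abs_ne_zero.2 h0)]
      calc |(|u j x| ^ (p-2) * u j x - |v x| ^ (p-2) * v x - |w j x| ^ (p-2) * w j x)| * |w j x|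
          ≤ (((p-1) * 2^(p-2) + 1) * (|v x|^(p-2) * |w j x| + |v x| * |w j x|^(p-2))) * |w j x| :=
            mul_le_mul_of_nonneg_right hkey (abs_nonneg _)
        _ = ((p-1) * 2^(p-2) + 1) *
              (|v x|^(p-2) * (|w j x| * |w j x|) + |v x| * (|w j x|^(p-2) * |w j x|)) := by ring
        _ = _ := by rw [e2, e3]
    have hui : UnifIntegrable H 1 μ :=
      bl_ui hp2 mem_v (fun j => (mem_w j).1) hkpos hwk hHb
    have haeH : ∀ᵐ x ∂μ, Tendsto (fun j => H j x) atTop (𝓝 0) := by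
      filter_upwards [hae] with x hx
      have hwx : Tendsto (fun j => w j x) atTop (𝓝 0) := by
        have := hx.sub_const (v x)
        simpa [hwdef] using this
      have hcf : Continuous (fun t : ℝ => |t| ^ (p-2) * t) :=
        continuous_iff_continuousAt.2 fun t => (bl_deriv hp t).continuousAt
      have h1 : Tendsto (fun j => |u j x| ^ (p-2) * u j x) atTop (𝓝 (|v x| ^ (p-2) * v x)) :=
        (hcf.tendsto _).comp hx
      have h2 : Tendsto (fun j => |w j x| ^ (p-2) * w j x) atTop (𝓝 (|(0:ℝ)| ^ (p-2) * 0)) :=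
        (hcf.tendsto _).comp hwx
      have := ((h1.sub (tendsto_const_nhds :
        Tendsto (fun _ : ℕ => |v x| ^ (p-2) * v x) atTop (𝓝 (|v x| ^ (p-2) * v x)))).sub h2).mul hwx
      rw [hHdef]
      simpa using this
    have htim : TendstoInMeasure μ H atTop 0 := by
      apply tendstoInMeasure_of_tendsto_ae hmeasH
      filter_upwards [haeH] with x hx
      simpa using hx
    have hLp := tendsto_Lp_finite_of_tendstoInMeasure le_rfl ENNReal.one_ne_top hmeasH
      MemLp.zero hui htim
    simp only [sub_zero] at hLp
    have htoReal : Tendsto (fun j => (eLpNorm (H j) 1 μ).toReal) atTop (𝓝 0) := by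
      have := (ENNReal.tendsto_toReal ENNReal.zero_ne_top).comp hLp
      exact this
    apply squeeze_zero_norm _ htoReal
    intro j
    rw [Real.norm_eq_abs, ← Real.norm_eq_abs]
    calc ‖∫ x, H j x ∂μ‖ ≤ ∫ x, ‖H j x‖ ∂μ := norm_integral_le_integral_norm _
      _ = (eLpNorm (H j) 1 μ).toReal := by
          rw [eLpNorm_one_eq_lintegral_enorm, integral_norm_eq_lintegral_enorm (hmeasH j)]
end

section
/- Let E be a real Hilbert space, (Ω, 𝒜, μ) a measure space with μ(Ω) < ∞, p > 2 a real number, and T : E → L^p(μ) a continuous linear map. Let λ* > 0 and λ ∈ ℝ with 0 < λ < λ*, and define I : E → ℝ by I(u) = (1/2)‖u‖_E² − (λ/2)∫_Ω |Tu|² dμ − (1/p)∫_Ω |Tu|^p dμ. Let W be a linear subspace of E such that ‖u‖_E² ≤ λ* ∫_Ω |Tu|² dμ for every u ∈ W. Then for every u ∈ W one has I(u) ≤ ((p−2)/(2p)) (λ* − λ)^{p/(p−2)} μ(Ω). -/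
open MeasureTheory Filter Topology

lemma pointwise_young_bound {p a t : ℝ} (hp : 2 < p) (ha : 0 < a) (ht : 0 ≤ t) :
    a / 2 * t ^ 2 - (1 / p) * t ^ p ≤ (p - 2) / (2 * p) * a ^ (p / (p - 2)) := by
  have hp0 : (0:ℝ) < p := by linarith
  have hp2 : (0:ℝ) < p - 2 := by linarith
  have hconj : (p / (p - 2)).HolderConjugate (p / 2) := by
    rw [Real.holderConjugate_iff]
    constructor
    · rw [lt_div_iff₀ hp2]; linarith
    · field_simp
      ring
  have hyoung := Real.young_inequality_of_nonneg ha.le (sq_nonneg t) hconj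
  have htp : t ^ p = (t ^ 2) ^ (p / 2) := by
    rw [← Real.rpow_natCast t 2, ← Real.rpow_mul ht]
    congr 1
    push_cast
    ring
  rw [htp]
  have h1 : a / 2 * t ^ 2 - (1 / p) * (t ^ 2) ^ (p / 2)
      ≤ (a ^ (p / (p - 2)) / (p / (p - 2)) + (t ^ 2) ^ (p / 2) / (p / 2)) / 2
        - (1 / p) * (t ^ 2) ^ (p / 2) := by
    linarith [hyoung]
  refine h1.trans (le_of_eq ?_)
  field_simp
  ring

/-- Upper bound for the functional on the subspace `W` spanned by low eigenfunctions. -/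
theorem functional_bounded_on_W
    {E : Type*} [NormedAddCommGroup E] [InnerProductSpace ℝ E] [CompleteSpace E]
    {Ω : Type*} [MeasurableSpace Ω] (μ : Measure Ω) [IsFiniteMeasure μ]
    (p : ℝ) (hp : 2 < p) [Fact (1 ≤ ENNReal.ofReal p)]
    (lamStar lam : ℝ) (hlam : 0 < lam) (hlam' : lam < lamStar)
    (T : E →L[ℝ] Lp ℝ (ENNReal.ofReal p) μ)
    (I : E → ℝ)
    (hI : ∀ u : E, I u = (1 / 2) * ‖u‖ ^ 2 - (lam / 2) * ∫ x, (T u x) ^ 2 ∂μ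
      - (1 / p) * ∫ x, |T u x| ^ p ∂μ)
    (W : Submodule ℝ E)
    (hW : ∀ u ∈ W, ‖u‖ ^ 2 ≤ lamStar * ∫ x, (T u x) ^ 2 ∂μ) :
    ∀ u ∈ W, I u ≤ ((p - 2) / (2 * p)) * (lamStar - lam) ^ (p / (p - 2)) * (μ Set.univ).toReal := by
  intro u hu
  have hp0 : (0:ℝ) < p := by linarith
  set a := lamStar - lam with ha
  have hap : 0 < a := by simp [ha]; linarith
  set f : Ω → ℝ := fun x => T u x with hf
  have hmem : MemLp f (ENNReal.ofReal p) μ := Lp.memLp (T u)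
  have hmem2 : MemLp f 2 μ := by
    refine hmem.mono_exponent ?_
    rw [show (2 : ENNReal) = ENNReal.ofReal 2 by norm_num]
    exact ENNReal.ofReal_le_ofReal hp.le
  have hintsq : Integrable (fun x => f x ^ 2) μ := hmem2.integrable_sq
  have hintp : Integrable (fun x => |f x| ^ p) μ := by
    have := hmem.integrable_norm_rpow (by simp [hp0]) (by simp)
    simpa [ENNReal.toReal_ofReal hp0.le, Real.norm_eq_abs] using this
  -- pointwise bound
  set C : ℝ := (p - 2) / (2 * p) * a ^ (p / (p - 2)) with hC
  have hpt : ∀ x, a / 2 * f x ^ 2 - (1 / p) * |f x| ^ p ≤ C := by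
    intro x
    have h2 : f x ^ 2 = |f x| ^ 2 := (sq_abs _).symm
    rw [h2]
    exact pointwise_young_bound hp hap (abs_nonneg _)
  have hintg : Integrable (fun x => a / 2 * f x ^ 2 - (1 / p) * |f x| ^ p) μ :=
    (hintsq.const_mul _).sub (hintp.const_mul _)
  have hint_le : ∫ x, (a / 2 * f x ^ 2 - (1 / p) * |f x| ^ p) ∂μ ≤ C * (μ Set.univ).toReal := by
    calc ∫ x, (a / 2 * f x ^ 2 - (1 / p) * |f x| ^ p) ∂μ
        ≤ ∫ _, C ∂μ := integral_mono hintg (integrable_const _) hpt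
      _ = C * (μ Set.univ).toReal := by simp [mul_comm, measureReal_def]
  have hsplit : ∫ x, (a / 2 * f x ^ 2 - (1 / p) * |f x| ^ p) ∂μ
      = a / 2 * ∫ x, f x ^ 2 ∂μ - (1 / p) * ∫ x, |f x| ^ p ∂μ := by
    rw [integral_sub (hintsq.const_mul _) (hintp.const_mul _),
      integral_const_mul, integral_const_mul]
  have hnorm := hW u hu
  have : I u ≤ a / 2 * ∫ x, f x ^ 2 ∂μ - (1 / p) * ∫ x, |f x| ^ p ∂μ := by
    rw [hI u]
    have : (1 / 2) * ‖u‖ ^ 2 ≤ (lamStar / 2) * ∫ x, f x ^ 2 ∂μ := by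
      have := hW u hu
      simp only [hf] at this ⊢
      linarith
    simp only [hf, ha] at *
    linarith
  calc I u ≤ a / 2 * ∫ x, f x ^ 2 ∂μ - (1 / p) * ∫ x, |f x| ^ p ∂μ := this
    _ = ∫ x, (a / 2 * f x ^ 2 - (1 / p) * |f x| ^ p) ∂μ := hsplit.symm
    _ ≤ C * (μ Set.univ).toReal := hint_le
    _ = (p - 2) / (2 * p) * (lamStar - lam) ^ (p / (p - 2)) * (μ Set.univ).toReal := by
        rw [hC, ha]
end
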